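/- arXiv:0809.3644 — 7 statements merged into one kernel-verified Lean document; each statement's English description precedes it below -/
import Mathlib

section
/- Let X be a Banach space over 𝕜 (𝕜 = ℝ or ℂ) and let T be a bounded linear operator on X. Then Re V(T) ⊆ {0} (i.e., T is skew-hermitian) if and only if ‖exp(ρT)‖ ≤ 1 for every ρ ∈ ℝ, where exp(ρT) = Σ_{n=0}^∞ (ρT)ⁿ/n! is the operator exponential. -/
/-- The numerical range of a bounded linear operator `T` on a Banach space `X` over `𝕜`:
the set of values `f (T x)` where `‖x‖ = 1`, `‖f‖ = 1` and `f x = 1`. -/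
def numericalRange (𝕜 : Type*) {X : Type*} [RCLike 𝕜] [NormedAddCommGroup X]
    [NormedSpace 𝕜 X] (T : X →L[𝕜] X) : Set 𝕜 :=
  {lam | ∃ (x : X) (f : X →L[𝕜] 𝕜), ‖x‖ = 1 ∧ ‖f‖ = 1 ∧ f x = 1 ∧ lam = f (T x)}

open RCLike Set Filter Topology Asymptotics

namespace SkewHermAux

variable {𝕜 X : Type*} [RCLike 𝕜] [NormedAddCommGroup X] [NormedSpace 𝕜 X]

section real

variable [NormedSpace ℝ X] [IsScalarTower ℝ 𝕜 X]

/-- difference quotient of the norm at `x` in direction `y` -/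
noncomputable def slp (x y : X) (h : ℝ) : ℝ := (‖x + h • y‖ - 1) / h

/-- the (one-sided) Gateaux derivative of the norm, as an infimum of slopes -/
noncomputable def nrp (x y : X) : ℝ := sInf (slp x y '' Ioi 0)

variable {x y z : X}

lemma slp_lb (hx : ‖x‖ = 1) {h : ℝ} (h0 : 0 < h) : -‖y‖ ≤ slp x y h := by
  have h1 : (1 : ℝ) - h * ‖y‖ ≤ ‖x + h • y‖ := by
    have h3 : ‖x‖ ≤ ‖x + h • y‖ + ‖h • y‖ := by
      have := norm_add_le (x + h • y) (-(h • y))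
      simpa using this
    have h2 : ‖h • y‖ ≤ h * ‖y‖ := by
      rw [norm_smul, Real.norm_eq_abs, abs_of_pos h0]
    rw [hx] at h3
    linarith
  rw [slp, le_div_iff₀ h0]
  nlinarith

lemma slp_ub (hx : ‖x‖ = 1) {h : ℝ} (h0 : 0 < h) : slp x y h ≤ ‖y‖ := by
  have h1 : ‖x + h • y‖ ≤ 1 + h * ‖y‖ := by
    have := norm_add_le x (h • y)
    rw [norm_smul, Real.norm_eq_abs, abs_of_pos h0, hx] at this
    linarith
  rw [slp, div_le_iff₀ h0]
  nlinarith

lemma slp_bddBelow (hx : ‖x‖ = 1) : BddBelow (slp x y '' Ioi 0) := by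
  refine ⟨-‖y‖, ?_⟩
  rintro s ⟨h, hh, rfl⟩
  exact slp_lb hx hh

lemma slp_nonempty : (slp x y '' Ioi 0).Nonempty :=
  ⟨slp x y 1, 1, by norm_num, rfl⟩

lemma nrp_le_slp (hx : ‖x‖ = 1) {h : ℝ} (h0 : 0 < h) : nrp x y ≤ slp x y h :=
  csInf_le (slp_bddBelow hx) ⟨h, h0, rfl⟩

lemma slp_mono (hx : ‖x‖ = 1) {h h' : ℝ} (h0 : 0 < h) (hle : h ≤ h') :
    slp x y h ≤ slp x y h' := by
  have h'0 : 0 < h' := lt_of_lt_of_le h0 hle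
  set a : ℝ := h / h' with ha
  have ha0 : 0 < a := div_pos h0 h'0
  have ha1 : a ≤ 1 := (div_le_one h'0).2 hle
  have key : x + h • y = (1 - a) • x + a • (x + h' • y) := by
    rw [smul_add, smul_smul, ← add_assoc, ← add_smul, sub_add_cancel, one_smul,
      ha, div_mul_cancel₀ _ (ne_of_gt h'0)]
  have hnorm : ‖x + h • y‖ ≤ (1 - a) + a * ‖x + h' • y‖ := by
    calc ‖x + h • y‖ ≤ ‖(1 - a) • x‖ + ‖a • (x + h' • y)‖ := by rw [key]; exact norm_add_le _ _
    _ = (1 - a) + a * ‖x + h' • y‖ := by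
        rw [norm_smul, norm_smul, Real.norm_eq_abs, Real.norm_eq_abs,
          abs_of_nonneg (by linarith), abs_of_pos ha0, hx, mul_one]
  have e1 : ‖x + h • y‖ - 1 ≤ a * (‖x + h' • y‖ - 1) := by nlinarith
  have e2 := mul_le_mul_of_nonneg_right e1 h'0.le
  have e3 : a * h' = h := div_mul_cancel₀ _ (ne_of_gt h'0)
  have e4 : a * (‖x + h' • y‖ - 1) * h' = (‖x + h' • y‖ - 1) * h := by
    rw [mul_comm a _, mul_assoc, e3]
  rw [slp, slp, div_le_div_iff₀ h0 h'0]
  linarith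

lemma nrp_exists_slp_lt (hx : ‖x‖ = 1) {ε : ℝ} (hε : 0 < ε) :
    ∃ h : ℝ, 0 < h ∧ slp x y h < nrp x y + ε := by
  obtain ⟨s, ⟨h, hh, rfl⟩, hlt⟩ := Real.lt_sInf_add_pos (slp_nonempty (x := x) (y := y)) hε
  exact ⟨h, hh, hlt⟩

lemma nrp_zero (hx : ‖x‖ = 1) : nrp x (0 : X) = 0 := by
  have : slp x (0 : X) '' Ioi 0 = {0} := by
    apply Subset.antisymm
    · rintro s ⟨h, hh, rfl⟩
      simp [slp, hx]
    · rintro s hs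
      rw [mem_singleton_iff] at hs
      exact ⟨1, by norm_num, by simp [slp, hx, hs]⟩
  rw [nrp, this, csInf_singleton]

lemma nrp_le_norm (hx : ‖x‖ = 1) : nrp x y ≤ ‖y‖ :=
  (nrp_le_slp hx one_pos).trans (slp_ub hx one_pos)

lemma nrp_smul (hx : ‖x‖ = 1) {c : ℝ} (hc : 0 < c) : nrp x (c • y) = c * nrp x y := by
  have key : ∀ (c : ℝ), 0 < c → ∀ y : X, nrp x (c • y) ≤ c * nrp x y := by
    intro c hc y
    refine le_of_forall_pos_le_add fun ε hε => ?_
    obtain ⟨h, hh, hlt⟩ := nrp_exists_slp_lt (y := y) hx (show (0:ℝ) < ε / c from div_pos hε hc)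
    have h2 : slp x (c • y) (h / c) = c * slp x y h := by
      rw [slp, slp, smul_smul, div_mul_cancel₀ _ (ne_of_gt hc)]
      field_simp
    calc nrp x (c • y) ≤ slp x (c • y) (h / c) := nrp_le_slp hx (div_pos hh hc)
    _ = c * slp x y h := h2
    _ ≤ c * (nrp x y + ε / c) := by nlinarith
    _ = c * nrp x y + ε := by field_simp
  refine le_antisymm (key c hc y) ?_
  have h5 := key c⁻¹ (inv_pos.2 hc) (c • y)
  rw [smul_smul, inv_mul_cancel₀ (ne_of_gt hc), one_smul] at h5
  have h6 := mul_le_mul_of_nonneg_left h5 hc.le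
  rw [← mul_assoc, mul_inv_cancel₀ (ne_of_gt hc), one_mul] at h6
  exact h6

lemma nrp_add (hx : ‖x‖ = 1) : nrp x (y + z) ≤ nrp x y + nrp x z := by
  refine le_of_forall_pos_le_add fun ε hε => ?_
  obtain ⟨h₁, hh₁, hlt₁⟩ := nrp_exists_slp_lt (y := y) hx (half_pos hε)
  obtain ⟨h₂, hh₂, hlt₂⟩ := nrp_exists_slp_lt (y := z) hx (half_pos hε)
  set h : ℝ := min h₁ h₂ / 2 with hdef
  have hh : 0 < h := by positivity
  have key : slp x (y + z) h ≤ slp x y (2 * h) + slp x z (2 * h) := by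
    have hx2 : x + h • (y + z) =
        (2⁻¹ : ℝ) • (x + (2 * h) • y) + (2⁻¹ : ℝ) • (x + (2 * h) • z) := by
      module
    have hn : ‖x + h • (y + z)‖ ≤ (‖x + (2*h) • y‖ + ‖x + (2*h) • z‖) / 2 := by
      rw [hx2]
      refine (norm_add_le _ _).trans ?_
      rw [norm_smul, norm_smul, Real.norm_eq_abs,
        abs_of_pos (show (0:ℝ) < 2⁻¹ by norm_num)]
      ring_nf
      rfl
    rw [slp, slp, slp]
    rw [← add_div, div_le_div_iff₀ hh (by linarith)]
    nlinarith
  have h2h₁ : 2 * h ≤ h₁ := by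
    have := min_le_left h₁ h₂; rw [hdef]; linarith
  have h2h₂ : 2 * h ≤ h₂ := by
    have := min_le_right h₁ h₂; rw [hdef]; linarith
  calc nrp x (y + z) ≤ slp x (y + z) h := nrp_le_slp hx hh
  _ ≤ slp x y (2*h) + slp x z (2*h) := key
  _ ≤ slp x y h₁ + slp x z h₂ :=
      add_le_add (slp_mono hx (by linarith) h2h₁) (slp_mono hx (by linarith) h2h₂)
  _ ≤ (nrp x y + ε/2) + (nrp x z + ε/2) := add_le_add hlt₁.le hlt₂.le
  _ = nrp x y + nrp x z + ε := by ring

lemma nrp_neg_le (hx : ‖x‖ = 1) : -nrp x (-y) ≤ nrp x y := by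
  have := nrp_add (y := y) (z := -y) hx
  rw [add_neg_cancel, nrp_zero hx] at this
  linarith

lemma nrp_self (hx : ‖x‖ = 1) : nrp x x ≤ 1 := by
  refine (nrp_le_slp hx one_pos).trans ?_
  have : x + (1:ℝ) • x = (2:ℝ) • x := by module
  rw [slp, this, norm_smul, hx]
  norm_num

lemma nrp_neg_self (hx : ‖x‖ = 1) : nrp x (-x) ≤ -1 := by
  refine (nrp_le_slp hx (show (0:ℝ) < 2⁻¹ by norm_num)).trans ?_
  have : x + (2⁻¹:ℝ) • (-x) = (2⁻¹:ℝ) • x := by module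
  rw [slp, this, norm_smul, hx]
  norm_num

set_option maxHeartbeats 1000000 in
lemma exists_support_functional {x : X} (hx : ‖x‖ = 1) (v : X) :
    ∃ F : X →L[𝕜] 𝕜, ‖F‖ = 1 ∧ F x = 1 ∧ re (F v) = nrp x v := by
  classical
  -- the partial linear functional on `span ℝ {v}`
  have Hpm : ∀ c : ℝ, c • v = 0 → c • (nrp x v) = 0 := by
    intro c hc
    by_cases hv : v = 0
    · subst hv; rw [nrp_zero hx]; simp
    · have : c = 0 := by
        rcases smul_eq_zero.1 hc with h | h
        · exact h
        · exact absurd h hv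
      simp [this]
  set f : X →ₗ.[ℝ] ℝ := LinearPMap.mkSpanSingleton' v (nrp x v) Hpm with hf
  have hdom : f.domain = Submodule.span ℝ {v} := LinearPMap.domain_mkSpanSingleton v _ Hpm
  have hfle : ∀ z : f.domain, f z ≤ nrp x z := by
    rintro ⟨z, hz⟩
    rw [hdom] at hz
    obtain ⟨c, rfl⟩ := Submodule.mem_span_singleton.1 hz
    have happ : f ⟨c • v, by rw [hdom]; exact Submodule.smul_mem _ _ (Submodule.mem_span_singleton_self v)⟩
        = c • (nrp x v) := LinearPMap.mkSpanSingleton'_apply v (nrp x v) Hpm c _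
    rw [happ]
    show c • nrp x v ≤ nrp x (c • v)
    rcases lt_trichotomy c 0 with hc | hc | hc
    · have h1 : c • v = (-c) • (-v) := by module
      rw [h1, nrp_smul hx (by linarith)]
      have h2 := nrp_neg_le (y := v) hx
      rw [smul_eq_mul]
      nlinarith
    · subst hc; simp [nrp_zero hx]
    · rw [nrp_smul hx hc, smul_eq_mul]
  obtain ⟨g, hg_eq, hg_le⟩ := exists_extension_of_le_sublinear f (nrp x)
    (fun c hc y => nrp_smul hx hc) (fun y z => nrp_add hx) hfle
  -- facts about g
  have hgv : g v = nrp x v := by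
    have hmem : v ∈ f.domain := by
      rw [hdom]; exact Submodule.mem_span_singleton_self v
    have := hg_eq ⟨v, hmem⟩
    rwa [LinearPMap.mkSpanSingleton'_apply_self] at this
  have hgx : g x = 1 := by
    have h1 : g x ≤ 1 := (hg_le x).trans (nrp_self hx)
    have h2 : g (-x) ≤ -1 := (hg_le (-x)).trans (nrp_neg_self hx)
    rw [map_neg] at h2
    linarith
  have hgbound : ∀ y : X, ‖g y‖ ≤ 1 * ‖y‖ := by
    intro y
    rw [Real.norm_eq_abs, one_mul, abs_le]
    constructor
    · have := (hg_le (-y)).trans (nrp_le_norm hx)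
      rw [map_neg, norm_neg] at this
      linarith
    · exact (hg_le y).trans (nrp_le_norm hx)
  set G : X →L[ℝ] ℝ := LinearMap.mkContinuous g 1 hgbound with hG
  have hGapp : ∀ y : X, G y = g y := fun _ => rfl
  have hGnorm : ‖G‖ = 1 := by
    refine le_antisymm (LinearMap.mkContinuous_norm_le _ zero_le_one _) ?_
    have := G.le_opNorm x
    rw [hGapp, hgx, hx, mul_one, Real.norm_eq_abs] at this
    calc (1:ℝ) ≤ |1| := by norm_num
    _ ≤ ‖G‖ := this
  set F : X →L[𝕜] 𝕜 := StrongDual.extendRCLike G with hFdef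
  have hFre : ∀ y : X, re (F y) = G y := by
    intro y
    rw [hFdef, ContinuousLinearMap.extendTo𝕜'_apply, map_sub, RCLike.ofReal_re,
      RCLike.mul_re, RCLike.I_re, RCLike.ofReal_im]
    simp
  have hFnorm : ‖F‖ = 1 := by rw [hFdef, ContinuousLinearMap.norm_extendTo𝕜', hGnorm]
  have hFx : F x = 1 := by
    have hre : re (F x) = 1 := by rw [hFre, hGapp, hgx]
    have hn : ‖F x‖ ≤ 1 := by
      have := F.le_opNorm x
      rwa [hFnorm, one_mul, hx] at this

    have him : im (F x) = 0 := by
      have h1 : ‖F x‖ ^ 2 = re (F x) * re (F x) + im (F x) * im (F x) :=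
        RCLike.norm_sq_eq_def
      have h2 : ‖F x‖ ^ 2 ≤ 1 := by nlinarith [norm_nonneg (F x)]
      nlinarith
    apply RCLike.ext
    · rw [hre, RCLike.one_re]
    · rw [him, RCLike.one_im]
  refine ⟨F, hFnorm, hFx, ?_⟩
  rw [hFre, hGapp, hgv]

/-- Key consequence of skew-hermitianity: the one-sided derivative of the norm
in the direction `T x` is nonpositive. -/
lemma nrp_apply_nonpos (T : X →L[𝕜] X)
    (H : ∀ lam ∈ numericalRange 𝕜 T, re lam = 0)
    {x : X} (hx : ‖x‖ = 1) : nrp x (T x) ≤ 0 := by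
  obtain ⟨F, hFn, hFx, hFre⟩ := exists_support_functional (𝕜 := 𝕜) hx (T x)
  have : F (T x) ∈ numericalRange 𝕜 T := ⟨x, F, hx, hFn, hFx, rfl⟩
  have h0 := H _ this
  rw [← hFre, h0]

/-- Quantitative version: small perturbations along `T u` barely increase the norm. -/
lemma norm_add_smul_le (T : X →L[𝕜] X)
    (H : ∀ lam ∈ numericalRange 𝕜 T, re lam = 0)
    (u : X) {ε : ℝ} (hε : 0 < ε) :
    ∃ δ > 0, ∀ h : ℝ, 0 < h → h ≤ δ → ‖u + h • T u‖ ≤ ‖u‖ + ε * h := by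
  by_cases hu : u = 0
  · refine ⟨1, one_pos, fun h h0 _ => ?_⟩
    subst hu
    rw [map_zero, smul_zero, add_zero, norm_zero]
    positivity
  · have hunorm : 0 < ‖u‖ := norm_pos_iff.2 hu
    set x : X := ‖u‖⁻¹ • u with hxdef
    have hx : ‖x‖ = 1 := by
      rw [hxdef, norm_smul, Real.norm_eq_abs, abs_of_pos (inv_pos.2 hunorm),
        inv_mul_cancel₀ (ne_of_gt hunorm)]
    have hTx : T x = ‖u‖⁻¹ • T u := by rw [hxdef, T.map_smul_of_tower]
    set ε' : ℝ := ε / ‖u‖ with hε'def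
    have hε' : 0 < ε' := div_pos hε hunorm
    obtain ⟨h₀, hh₀, hlt⟩ := nrp_exists_slp_lt (y := T x) hx hε'
    refine ⟨h₀, hh₀, fun h h0 hle => ?_⟩
    have hslp : slp x (T x) h ≤ ε' := by
      have h1 := slp_mono (y := T x) hx h0 hle
      have h2 := nrp_apply_nonpos T H hx
      linarith
    have hxb : ‖x + h • T x‖ ≤ 1 + ε' * h := by
      rw [slp, div_le_iff₀ h0] at hslp
      nlinarith
    have hscale : u + h • T u = ‖u‖ • (x + h • T x) := by
      have h1 : ‖u‖ • x = u := by
        rw [hxdef, smul_smul, mul_inv_cancel₀ (ne_of_gt hunorm), one_smul]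
      have h2 : ‖u‖ • (h • T x) = h • T u := by
        rw [hTx, smul_comm, smul_smul, smul_smul, mul_assoc,
          mul_inv_cancel₀ (ne_of_gt hunorm), mul_one]
      rw [smul_add, h1, h2]
    calc ‖u + h • T u‖ = ‖u‖ * ‖x + h • T x‖ := by
          rw [hscale, norm_smul, Real.norm_eq_abs, abs_of_pos hunorm]
    _ ≤ ‖u‖ * (1 + ε' * h) := by nlinarith
    _ = ‖u‖ + ε * h := by rw [hε'def]; field_simp

end real

section exp

variable [NormedSpace ℝ X] [IsScalarTower ℝ 𝕜 X] [CompleteSpace X]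

lemma hasDerivAt_exp_curve (T : X →L[𝕜] X) (x : X) (t : ℝ) :
    HasDerivAt (fun s : ℝ => (NormedSpace.exp ((s : 𝕜) • T)) x)
      (T ((NormedSpace.exp ((t : 𝕜) • T)) x)) t := by
  have h1 : HasDerivAt (fun z : 𝕜 => NormedSpace.exp (z • T))
      (NormedSpace.exp ((t : 𝕜) • T) * T) ((t : 𝕜)) :=
    hasDerivAt_exp_smul_const T (t : 𝕜)
  have h2 := (hasDerivAt_iff_hasFDerivAt.1 h1).restrictScalars ℝ
  have h3 : HasFDerivAt (fun ρ : ℝ => (ρ : 𝕜)) (RCLike.ofRealCLM (K := 𝕜)) t :=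
    (RCLike.ofRealCLM (K := 𝕜)).hasFDerivAt
  have h4 := h2.comp t h3
  have h5 := (((ContinuousLinearMap.apply 𝕜 X) x).restrictScalars
      ℝ).hasFDerivAt.comp t h4
  have h6 := h5.hasDerivAt
  have hc : NormedSpace.exp ((t : 𝕜) • T) * T = T * NormedSpace.exp ((t : 𝕜) • T) :=
    (((Commute.refl T).smul_left ((t : 𝕜))).exp_left).eq
  simp only [Function.comp_def, ContinuousLinearMap.coe_comp',
    ContinuousLinearMap.coe_restrictScalars', ContinuousLinearMap.flip_apply,
    ContinuousLinearMap.apply_apply, RCLike.ofRealCLM_apply,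
    ContinuousLinearMap.smulRight_apply, ContinuousLinearMap.one_apply,
    RCLike.ofReal_one, one_smul] at h6
  rw [hc, ContinuousLinearMap.toSpanSingleton_apply, one_smul, ContinuousLinearMap.mul_apply] at h6
  exact h6

lemma norm_exp_apply_le (T : X →L[𝕜] X)
    (H : ∀ lam ∈ numericalRange 𝕜 T, re lam = 0)
    {ρ : ℝ} (hρ : 0 ≤ ρ) (x : X) :
    ‖(NormedSpace.exp ((ρ : 𝕜) • T)) x‖ ≤ ‖x‖ := by
  set c : ℝ → X := fun s => (NormedSpace.exp ((s : 𝕜) • T)) x with hc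
  have hderiv : ∀ t : ℝ, HasDerivAt c (T (c t)) t := fun t => hasDerivAt_exp_curve T x t
  have hcont : ContinuousOn (fun t => ‖c t‖) (Icc 0 ρ) :=
    continuous_norm.comp_continuousOn
      (fun t _ => (hderiv t).continuousAt.continuousWithinAt)
  have hc0 : c 0 = x := by
    rw [hc]
    simp only [RCLike.ofReal_zero, zero_smul, NormedSpace.exp_zero,
      ContinuousLinearMap.one_apply]
  have key := le_gronwallBound_of_liminf_deriv_right_le (f := fun t => ‖c t‖)
      (f' := fun _ => (0 : ℝ)) (δ := ‖x‖) (K := 0) (ε := 0) (a := 0) (b := ρ)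
      hcont ?_ (by show ‖c 0‖ ≤ ‖x‖; rw [hc0]) (fun t _ => by norm_num) ρ ⟨hρ, le_rfl⟩
  · simpa [hc, gronwallBound_K0] using key
  · intro t _ r hr
    have hr0 : (0 : ℝ) < r := hr
    have hr' : (0 : ℝ) < r / 4 := by linarith
    set u : X := c t with hu
    obtain ⟨δ, hδ, hb⟩ := norm_add_smul_le T H u hr'
    have hlo := (hasDerivAt_iff_isLittleO.1 (hderiv t)).def hr'
    have ev1 : ∀ᶠ z in 𝓝[>] t, ‖c z - c t - (z - t) • T u‖ ≤ r / 4 * ‖z - t‖ :=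
      hlo.filter_mono nhdsWithin_le_nhds
    have ev2 : Ioc t (t + δ) ∈ 𝓝[>] t := Ioc_mem_nhdsGT_of_mem ⟨le_rfl, by linarith⟩
    refine Filter.Eventually.frequently ?_
    filter_upwards [ev1, ev2] with z h1 h2
    have hz : 0 < z - t := by
      have := h2.1; linarith
    have hzd : z - t ≤ δ := by
      have := h2.2; linarith
    have hb' := hb (z - t) hz hzd
    have htri : ‖c z‖ ≤ ‖c z - c t - (z - t) • T u‖ + ‖u + (z - t) • T u‖ := by
      have := norm_add_le (c z - c t - (z - t) • T u) (u + (z - t) • T u)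
      rw [hu] at this ⊢
      refine (congrArg norm ?_).trans_le this
      abel
    have hnz : ‖z - t‖ = z - t := by rw [Real.norm_eq_abs, abs_of_pos hz]
    rw [hnz] at h1
    have hslope : ‖c z‖ - ‖c t‖ ≤ r / 2 * (z - t) := by
      rw [← hu] at *
      nlinarith
    calc (z - t)⁻¹ * (‖c z‖ - ‖c t‖) ≤ (z - t)⁻¹ * (r / 2 * (z - t)) := by
          apply mul_le_mul_of_nonneg_left hslope (le_of_lt (inv_pos.2 hz))
    _ = r / 2 := by field_simp
    _ < r := by linarith

lemma norm_exp_le_one (T : X →L[𝕜] X)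
    (H : ∀ lam ∈ numericalRange 𝕜 T, re lam = 0)
    {ρ : ℝ} (hρ : 0 ≤ ρ) : ‖NormedSpace.exp ((ρ : 𝕜) • T)‖ ≤ 1 :=
  ContinuousLinearMap.opNorm_le_bound _ zero_le_one fun x => by
    rw [one_mul]; exact norm_exp_apply_le T H hρ x

end exp

end SkewHermAux

/-- An operator `T` is skew-hermitian (`Re V(T) ⊆ {0}`) if and only if
`‖exp (ρ T)‖ ≤ 1` for every real `ρ`. -/
theorem skewHermitian_iff_norm_exp_le_one
    {𝕜 X : Type*} [RCLike 𝕜] [NormedAddCommGroup X] [NormedSpace 𝕜 X] [CompleteSpace X]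
    (T : X →L[𝕜] X) :
    (∀ lam ∈ numericalRange 𝕜 T, RCLike.re lam = 0) ↔
      ∀ ρ : ℝ, ‖NormedSpace.exp ((ρ : 𝕜) • T)‖ ≤ 1 := by
  letI : NormedSpace ℝ X := NormedSpace.restrictScalars ℝ 𝕜 X
  letI : IsScalarTower ℝ 𝕜 X := ⟨fun r k x => by
    rw [Algebra.smul_def, mul_smul]; rfl⟩
  constructor
  · intro H ρ
    rcases le_or_gt 0 ρ with hρ | hρ
    · exact SkewHermAux.norm_exp_le_one T H hρ
    · have H' : ∀ lam ∈ numericalRange 𝕜 (-T), RCLike.re lam = 0 := by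
        rintro lam ⟨x, f, h1, h2, h3, h4⟩
        have hmem : f (T x) ∈ numericalRange 𝕜 T := ⟨x, f, h1, h2, h3, rfl⟩
        have h5 := H _ hmem
        rw [h4]
        simp only [ContinuousLinearMap.neg_apply, map_neg]
        rw [h5, neg_zero]
      have heq : ((ρ : ℝ) : 𝕜) • T = (((-ρ : ℝ)) : 𝕜) • (-T) := by
        push_cast
        rw [neg_smul, smul_neg, neg_neg]
      rw [heq]
      exact SkewHermAux.norm_exp_le_one (-T) H' (by linarith)
  · intro hexp lam hlam
    obtain ⟨x, f, hx, hf, hfx, rfl⟩ := hlam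
    have hcurve := SkewHermAux.hasDerivAt_exp_curve (𝕜 := 𝕜) T x 0
    set M : X →L[ℝ] ℝ := RCLike.reCLM.comp (f.restrictScalars ℝ) with hM
    have hMapp : ∀ y : X, M y = RCLike.re (f y) := fun y => rfl
    have hψ := M.hasFDerivAt.comp_hasDerivAt 0 hcurve
    have hval : M ((NormedSpace.exp (((0 : ℝ) : 𝕜) • T)) x) = 1 := by
      simp only [RCLike.ofReal_zero, zero_smul, NormedSpace.exp_zero,
        ContinuousLinearMap.one_apply, hMapp, hfx, RCLike.one_re]
    have hmax : IsLocalMax (fun ρ : ℝ => M ((NormedSpace.exp ((ρ : 𝕜) • T)) x)) 0 := by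
      apply Filter.Eventually.of_forall
      intro ρ
      show M _ ≤ M _
      rw [hval, hMapp]
      calc RCLike.re (f ((NormedSpace.exp ((ρ : 𝕜) • T)) x))
          ≤ ‖f ((NormedSpace.exp ((ρ : 𝕜) • T)) x)‖ := RCLike.re_le_norm _
      _ ≤ ‖f‖ * ‖(NormedSpace.exp ((ρ : 𝕜) • T)) x‖ := f.le_opNorm _
      _ ≤ ‖f‖ * (‖NormedSpace.exp ((ρ : 𝕜) • T)‖ * ‖x‖) := by
          have := (NormedSpace.exp ((ρ : 𝕜) • T)).le_opNorm x
          have h0 : (0:ℝ) ≤ ‖f‖ := norm_nonneg _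
          nlinarith
      _ ≤ 1 := by
          rw [hf, hx, one_mul, mul_one]
          exact hexp ρ
    have h0 := hmax.hasDerivAt_eq_zero hψ
    have : M (T ((NormedSpace.exp (((0 : ℝ) : 𝕜) • T)) x)) = RCLike.re (f (T x)) := by
      simp only [RCLike.ofReal_zero, zero_smul, NormedSpace.exp_zero,
        ContinuousLinearMap.one_apply, hMapp]
    rw [this] at h0
    exact h0
end

section
/- Let X be a Banach space over 𝕜 (𝕜 = ℝ or ℂ) and let T be a bounded linear operator on X. Then Re V(T) ⊆ {0} (i.e., T is skew-hermitian) if and only if T belongs to the tangent space at the identity of the group of surjective isometries of X, i.e., there exists a map f : ℝ → L(X) such that f(t) is a bijective isometry of X for every t ∈ [-1,1], f(0) = Id, and f is differentiable at 0 (in operator norm) with derivative f'(0) = T. -/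
open NormedSpace Filter Asymptotics

section Helpers

variable {𝕜 X : Type*} [RCLike 𝕜] [NormedAddCommGroup X] [NormedSpace 𝕜 X] [CompleteSpace X]
  [NormedSpace ℝ X] [SMulCommClass 𝕜 ℝ X]

omit [CompleteSpace X] [SMulCommClass 𝕜 ℝ X] in
lemma aux_real_smul_eq (t : ℝ) (x : X) : t • x = ((t : 𝕜) • x) := by
  have h : Continuous fun s : ℝ => ((s : 𝕜) • x) := by fun_prop
  have := map_real_smul (AddMonoidHom.mk' (fun s : ℝ => ((s : 𝕜) • x)) (by
    intro a b; push_cast; rw [add_smul])) h t 1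
  simpa using this.symm

omit [CompleteSpace X] in
lemma aux_real_smul_clm_eq (t : ℝ) (S : X →L[𝕜] X) : t • S = ((t : 𝕜) • S) := by
  ext x
  rw [ContinuousLinearMap.smul_apply, ContinuousLinearMap.smul_apply,
    aux_real_smul_eq (𝕜 := 𝕜)]

lemma aux_hasDerivAt_realexp (T : X →L[𝕜] X) :
    HasDerivAt (fun t : ℝ => exp (((t : 𝕜)) • T)) T 0 := by
  have hg : HasDerivAt (fun u : 𝕜 => exp (u • T)) T 0 := by
    simpa using hasDerivAt_exp_smul_const (𝕂 := 𝕜) T 0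
  rw [hasDerivAt_iff_isLittleO] at hg ⊢
  have hof : Tendsto (fun t : ℝ => (t : 𝕜)) (nhds 0) (nhds 0) := by
    have := RCLike.continuous_ofReal (K := 𝕜)
    simpa using this.tendsto 0
  have key := hg.comp_tendsto hof
  simp only [Function.comp_def, sub_zero] at key
  have key2 : (fun t : ℝ => exp ((t:𝕜) • T) - exp ((0:𝕜) • T) - (t:𝕜) • T)
      =o[nhds 0] (fun t : ℝ => t) :=
    key.trans_isBigO (Asymptotics.isBigO_of_le _ (fun t => by simp))
  have e1 : (fun t : ℝ => exp ((t:𝕜) • T) - exp (((0:ℝ):𝕜) • T) - (t - 0) • T)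
      = (fun t : ℝ => exp ((t:𝕜) • T) - exp ((0:𝕜) • T) - (t:𝕜) • T) := by
    funext t
    rw [sub_zero, aux_real_smul_clm_eq, RCLike.ofReal_zero]
  have e2 : (fun t : ℝ => t - 0) = fun t : ℝ => t := by funext t; rw [sub_zero]
  rw [e1, e2]
  exact key2

end Helpers

/-- An operator `T` is skew-hermitian (`Re V(T) ⊆ {0}`) if and only if `T` is the derivative at
`0` of a curve `f : ℝ → L(X)` with `f 0 = Id` taking values in the surjective isometries of `X`
on `[-1, 1]`; that is, iff `T` belongs to the tangent space at the identity of the group of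
surjective isometries of `X`. -/
theorem skewHermitian_iff_mem_tangentSpace_of_isometryGroup
    {𝕜 X : Type*} [RCLike 𝕜] [NormedAddCommGroup X] [NormedSpace 𝕜 X] [CompleteSpace X]
    [NormedSpace ℝ X] [SMulCommClass 𝕜 ℝ X] (T : X →L[𝕜] X) :
    (∀ lam ∈ numericalRange 𝕜 T, RCLike.re lam = 0) ↔
      ∃ f : ℝ → (X →L[𝕜] X),
        (∀ t ∈ Set.Icc (-1 : ℝ) 1, Function.Bijective ⇑(f t) ∧ ∀ x : X, ‖f t x‖ = ‖x‖) ∧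
        f 0 = 1 ∧ HasDerivAt f T 0 := by
  constructor
  · -- forward direction
    intro H
    set M : ℝ := ‖T‖ with hM
    -- dissipativity in both directions
    have h1 : ∀ (x : X) (s : ℝ), ‖x‖ ≤ ‖x + (s:𝕜) • T x‖ := by
      intro x s
      rcases eq_or_ne x 0 with rfl | hx
      · simp
      obtain ⟨φ, hφ, hφx⟩ := exists_dual_vector 𝕜 x (norm_ne_zero_iff.mpr hx)
      have hxn : (0:ℝ) < ‖x‖ := norm_pos_iff.mpr hx
      have hre : RCLike.re (φ (T x)) = 0 := by
        set c : 𝕜 := ((‖x‖⁻¹ : ℝ) : 𝕜) with hc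
        have hmem : φ (T (c • x)) ∈ numericalRange 𝕜 T := by
          refine ⟨c • x, φ, ?_, hφ, ?_, rfl⟩
          · rw [norm_smul, hc, RCLike.norm_ofReal, abs_of_pos (by positivity)]
            field_simp
          · rw [map_smul, hφx, hc, smul_eq_mul, ← RCLike.ofReal_mul]
            rw [inv_mul_cancel₀ (ne_of_gt hxn)]
            simp
        have h0 := H _ hmem
        rw [map_smul, map_smul, smul_eq_mul, hc, RCLike.re_ofReal_mul] at h0
        rcases mul_eq_zero.mp h0 with h | h
        · exact absurd h (by positivity)
        · exact h
      have hrecalc : RCLike.re (φ (x + (s:𝕜) • T x)) = ‖x‖ := by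
        rw [map_add, map_smul, smul_eq_mul, map_add, hφx]
        have : RCLike.re ((s:𝕜) * φ (T x)) = s * RCLike.re (φ (T x)) :=
          RCLike.re_ofReal_mul s (φ (T x))
        rw [this, hre, mul_zero, add_zero, RCLike.ofReal_re]
      calc ‖x‖ = RCLike.re (φ (x + (s:𝕜) • T x)) := hrecalc.symm
        _ ≤ ‖φ (x + (s:𝕜) • T x)‖ := RCLike.re_le_norm _
        _ ≤ ‖φ‖ * ‖x + (s:𝕜) • T x‖ := φ.le_opNorm _
        _ = ‖x + (s:𝕜) • T x‖ := by rw [hφ, one_mul]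
    set E : ℝ → (X →L[𝕜] X) := fun t => exp ((t:𝕜) • T) with hE
    have hE0 : E 0 = 1 := by simp [hE, exp_zero]
    have hEder : HasDerivAt E T 0 := aux_hasDerivAt_realexp T
    have hgroup : ∀ s t : ℝ, E s * E t = E (s + t) := by
      intro s t
      rw [hE]
      simp only
      letI : NormedAlgebra ℚ (X →L[𝕜] X) := .restrictScalars ℚ 𝕜 _
      rw [← exp_add_of_commute (((Commute.refl T).smul_left (s:𝕜)).smul_right (t:𝕜))]
      congr 1
      rw [← add_smul]
      push_cast
      ring_nf
    have hinv : ∀ t : ℝ, E (-t) * E t = 1 := by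
      intro t
      rw [hgroup, neg_add_cancel, hE0]
    -- the remainder and the quadratic bound
    set r : ℝ → (X →L[𝕜] X) := fun s => E s - 1 - (s:𝕜) • T with hr
    have hro : (fun s : ℝ => r s) =o[nhds 0] (fun s : ℝ => s) := by
      have := (hasDerivAt_iff_isLittleO.mp hEder)
      simp only [sub_zero, hE0] at this
      refine this.congr_left ?_
      intro s
      rw [hr]
      simp only
      rw [aux_real_smul_clm_eq]
    set c : ℝ → ℝ := fun s => s^2 * M^2 + ‖r s‖ with hcdef
    have hc0 : ∀ s, 0 ≤ c s := fun s => by positivity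
    have hEc : ∀ s : ℝ, ‖E s‖ ≤ 1 + c s := by
      intro s
      apply ContinuousLinearMap.opNorm_le_bound _ (by positivity)
      intro y
      have step1 : ‖y + (s:𝕜) • T y‖ ≤ ‖y‖ + s^2 * M^2 * ‖y‖ := by
        have hkey := h1 (y + (s:𝕜) • T y) (-s)
        have hrw : (y + (s:𝕜) • T y) + ((-s : ℝ):𝕜) • T (y + (s:𝕜) • T y)
            = y - (((s^2 : ℝ)):𝕜) • T (T y) := by
          rw [map_add, map_smul]
          push_cast
          rw [smul_add, smul_smul]
          module
        rw [hrw] at hkey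
        have hb : ‖(((s^2 : ℝ)):𝕜) • T (T y)‖ ≤ s^2 * M^2 * ‖y‖ := by
          rw [norm_smul, RCLike.norm_ofReal, abs_of_nonneg (sq_nonneg s)]
          have h1' : ‖T (T y)‖ ≤ M * (M * ‖y‖) :=
            (T.le_opNorm (T y)).trans (by
              have := T.le_opNorm y
              exact mul_le_mul_of_nonneg_left this (norm_nonneg T))
          calc s^2 * ‖T (T y)‖ ≤ s^2 * (M * (M * ‖y‖)) := by
                exact mul_le_mul_of_nonneg_left h1' (sq_nonneg s)
            _ = s^2 * M^2 * ‖y‖ := by ring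
        calc ‖y + (s:𝕜) • T y‖ ≤ ‖y - (((s^2 : ℝ)):𝕜) • T (T y)‖ := hkey
          _ ≤ ‖y‖ + ‖(((s^2 : ℝ)):𝕜) • T (T y)‖ := norm_sub_le _ _
          _ ≤ ‖y‖ + s^2 * M^2 * ‖y‖ := by linarith
      have hdecomp : E s y = (y + (s:𝕜) • T y) + (r s) y := by
        rw [hr]
        simp only [ContinuousLinearMap.sub_apply, ContinuousLinearMap.smul_apply,
          ContinuousLinearMap.one_apply]
        abel
      calc ‖E s y‖ = ‖(y + (s:𝕜) • T y) + (r s) y‖ := by rw [hdecomp]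
        _ ≤ ‖y + (s:𝕜) • T y‖ + ‖(r s) y‖ := norm_add_le _ _
        _ ≤ (‖y‖ + s^2 * M^2 * ‖y‖) + ‖r s‖ * ‖y‖ := by
            have := (r s).le_opNorm y
            linarith
        _ = (1 + c s) * ‖y‖ := by rw [hcdef]; ring
    have hnorm1 : ∀ t : ℝ, ‖E t‖ ≤ 1 := by
      intro t
      rcases eq_or_ne t 0 with rfl | ht
      · rw [hE0]
        have := ContinuousLinearMap.norm_id_le (𝕜 := 𝕜) (E := X)
        simpa [ContinuousLinearMap.one_def] using this
      have hpow : ∀ n : ℕ, 1 ≤ n → ‖E t‖ ≤ Real.exp ((n:ℝ) * c (t/n)) := by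
        intro n hn
        have hn0 : (n:ℝ) ≠ 0 := Nat.cast_ne_zero.mpr (by omega)
        have hsplit : E t = (E (t/n))^n := by
          rw [hE]
          simp only
          letI : NormedAlgebra ℚ (X →L[𝕜] X) := .restrictScalars ℚ 𝕜 _
          rw [← exp_nsmul, ← Nat.cast_smul_eq_nsmul 𝕜, smul_smul]
          have hnk : ((n:ℕ) : 𝕜) ≠ 0 := Nat.cast_ne_zero.mpr (by omega)
          have hsc : ((n:ℕ) : 𝕜) * (((t/(n:ℕ) : ℝ)) : 𝕜) = ((t:ℝ) : 𝕜) := by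
            push_cast
            field_simp
          rw [hsc]
        calc ‖E t‖ = ‖(E (t/n))^n‖ := by rw [hsplit]
          _ ≤ ‖E (t/n)‖^n := norm_pow_le' _ (by omega)
          _ ≤ (1 + c (t/n))^n := pow_le_pow_left₀ (norm_nonneg _) (hEc _) n
          _ ≤ (Real.exp (c (t/n)))^n := by
              refine pow_le_pow_left₀ (by positivity) ?_ n
              linarith [Real.add_one_le_exp (c (t/n))]
          _ = Real.exp ((n:ℝ) * c (t/n)) := by rw [Real.exp_nat_mul]
      have hto0 : Tendsto (fun n : ℕ => t/(n:ℝ)) atTop (nhds 0) :=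
        tendsto_const_div_atTop_nhds_zero_nat t
      have h2 := (hro.comp_tendsto hto0).norm_left
      have h3 := h2.tendsto_div_nhds_zero
      have hA : Tendsto (fun n : ℕ => (n:ℝ) * ((t/(n:ℝ))^2 * M^2)) atTop (nhds 0) := by
        apply (tendsto_const_div_atTop_nhds_zero_nat (t^2*M^2)).congr'
        filter_upwards [eventually_ge_atTop 1] with n hn
        have hn0 : (n:ℝ) ≠ 0 := Nat.cast_ne_zero.mpr (by omega)
        field_simp
      have hB : Tendsto (fun n : ℕ => (n:ℝ) * ‖r (t/(n:ℝ))‖) atTop (nhds 0) := by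
        have h4 := h3.const_mul t
        rw [mul_zero] at h4
        apply h4.congr'
        filter_upwards [eventually_ge_atTop 1] with n hn
        have hn0 : (n:ℝ) ≠ 0 := Nat.cast_ne_zero.mpr (by omega)
        simp only [Function.comp_def]
        field_simp
      have hlim : Tendsto (fun n : ℕ => (n:ℝ) * c (t/(n:ℝ))) atTop (nhds 0) := by
        have := hA.add hB
        rw [add_zero] at this
        apply this.congr
        intro n
        rw [hcdef]
        ring
      have hexp : Tendsto (fun n : ℕ => Real.exp ((n:ℝ) * c (t/(n:ℝ)))) atTop (nhds 1) := by
        have := (Real.continuous_exp.tendsto 0).comp hlim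
        simpa [Function.comp_def] using this
      exact ge_of_tendsto hexp (eventually_atTop.2 ⟨1, fun n hn => hpow n hn⟩)
    have hle : ∀ (t : ℝ) (x : X), ‖E t x‖ ≤ ‖x‖ := by
      intro t x
      calc ‖E t x‖ ≤ ‖E t‖ * ‖x‖ := (E t).le_opNorm x
        _ ≤ 1 * ‖x‖ := mul_le_mul_of_nonneg_right (hnorm1 t) (norm_nonneg x)
        _ = ‖x‖ := one_mul _
    have hleft : ∀ (t : ℝ) (x : X), E (-t) (E t x) = x := by
      intro t x
      have h := congrArg (fun A : X →L[𝕜] X => A x) (hinv t)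
      simpa [ContinuousLinearMap.mul_apply] using h
    have hisoeq : ∀ (t : ℝ) (x : X), ‖E t x‖ = ‖x‖ := by
      intro t x
      refine le_antisymm (hle t x) ?_
      calc ‖x‖ = ‖E (-t) (E t x)‖ := by rw [hleft]
        _ ≤ ‖E t x‖ := hle _ _
    refine ⟨E, fun t _ => ⟨?_, hisoeq t⟩, hE0, hEder⟩
    refine Function.bijective_iff_has_inverse.mpr ⟨E (-t), hleft t, fun x => ?_⟩
    have := hleft (-t) x
    rwa [neg_neg] at this
  · -- backward direction
    rintro ⟨f, hiso, hf0, hder⟩ lam ⟨x, φ, hx, hφ, hφx, rfl⟩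
    -- evaluation at x as a continuous ℝ-linear map
    let evx : (X →L[𝕜] X) →L[ℝ] X :=
      LinearMap.mkContinuous
        { toFun := fun A => A x
          map_add' := fun A B => rfl
          map_smul' := fun t A => rfl } ‖x‖
        (fun A => by rw [mul_comm]; exact A.le_opNorm x)
    -- real part of φ as a continuous ℝ-linear map
    let ψ : X →L[ℝ] ℝ :=
      LinearMap.mkContinuous
        { toFun := fun y => RCLike.re (φ y)
          map_add' := fun y z => by simp
          map_smul' := fun t y => by
            show RCLike.re (φ (t • y)) = t • RCLike.re (φ y)
            rw [aux_real_smul_eq (𝕜 := 𝕜), map_smul, smul_eq_mul,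
              RCLike.re_ofReal_mul, smul_eq_mul] } ‖φ‖
        (fun y => by
          rw [Real.norm_eq_abs]
          exact (RCLike.abs_re_le_norm _).trans (φ.le_opNorm y))
    have hh : HasDerivAt (fun t : ℝ => ψ (evx (f t))) (ψ (evx T)) 0 :=
      (ψ.comp evx).hasFDerivAt.comp_hasDerivAt 0 hder
    have hmax : IsLocalMax (fun t : ℝ => ψ (evx (f t))) 0 := by
      have hmem : Set.Icc (-1:ℝ) 1 ∈ nhds (0:ℝ) :=
        Icc_mem_nhds (by norm_num) (by norm_num)
      filter_upwards [hmem] with t ht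
      have h0 : ψ (evx (f 0)) = 1 := by
        simp only [ψ, evx, LinearMap.mkContinuous_apply, LinearMap.coe_mk, AddHom.coe_mk,
          hf0, ContinuousLinearMap.one_apply, hφx]
        simp
      have hval : ψ (evx (f t)) ≤ 1 := by
        have h1' : ψ (evx (f t)) = RCLike.re (φ (f t x)) := rfl
        rw [h1']
        calc RCLike.re (φ (f t x)) ≤ ‖φ (f t x)‖ := RCLike.re_le_norm _
          _ ≤ ‖φ‖ * ‖f t x‖ := φ.le_opNorm _
          _ = 1 := by rw [hφ, one_mul, (hiso t ht).2 x, hx]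
      rw [h0]
      exact hval
    have := hmax.hasDerivAt_eq_zero hh
    have hfin : RCLike.re (φ (T x)) = 0 := this
    exact hfin
end

section
/- Let X be a nonzero Banach space over 𝕜 (𝕜 = ℝ or ℂ), T a bounded linear operator on X, and λ ∈ 𝕜 with |λ| = 1. If the operator λT satisfies the Daugavet equation ‖Id + λT‖ = 1 + ‖T‖, then ‖T‖ ∈ λ · closure(V(T)); that is, the scalar λ̄‖T‖ (complex conjugate of λ times ‖T‖) belongs to the closure of V(T). -/
private lemma daugavet_arith_aux {N δ α K : ℝ} (hN : 0 < N) (hδ : 0 < δ) (hα0 : 0 < α)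
    (hα2 : α ≤ δ / (4 * N ^ 2 + 1)) (hK : K = N - δ)
    (hfinal : (1 + α * N) * (1 - α * K) ≤ 1 + α ^ 2 * N ^ 2) : False := by
  subst hK
  have h5 : α * δ ≤ α * (α * (2 * N ^ 2)) := by
    nlinarith [mul_nonneg (mul_nonneg hα0.le hα0.le) (mul_nonneg hN.le hδ.le)]
  have h6 : δ ≤ α * (2 * N ^ 2) := le_of_mul_le_mul_left h5 hα0
  have h7 : α * (2 * N ^ 2) ≤ δ / (4 * N ^ 2 + 1) * (2 * N ^ 2) :=
    mul_le_mul_of_nonneg_right hα2 (by positivity)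
  have h8 : δ / (4 * N ^ 2 + 1) * (2 * N ^ 2) < δ := by
    rw [div_mul_eq_mul_div, div_lt_iff₀ (by positivity)]
    nlinarith
  linarith

private lemma daugavet_sq_aux {N ε a b : ℝ} (hN : 0 < N) (hε : 0 < ε)
    (hab : a ^ 2 + b ^ 2 ≤ N ^ 2) (hrea : N - ε ^ 2 / (2 * N) < a) :
    (N - a) ^ 2 + b ^ 2 < ε ^ 2 := by
  have h1 : (N - a) ^ 2 + b ^ 2 ≤ 2 * N * (N - a) := by nlinarith
  have h2 : N - a < ε ^ 2 / (2 * N) := by linarith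
  have h3 : 2 * N * (N - a) < 2 * N * (ε ^ 2 / (2 * N)) :=
    mul_lt_mul_of_pos_left h2 (by positivity)
  have h4 : 2 * N * (ε ^ 2 / (2 * N)) = ε ^ 2 := by field_simp
  linarith

/-- If `λ T` satisfies the Daugavet equation `‖Id + λT‖ = 1 + ‖T‖` for a modulus-one scalar `λ`,
then `conj λ * ‖T‖` belongs to the closure of the numerical range of `T`,
i.e. `‖T‖ ∈ λ • closure (V(T))`. -/
theorem conj_smul_norm_mem_closure_numericalRange_of_daugavet
    {𝕜 X : Type*} [RCLike 𝕜] [NormedAddCommGroup X] [NormedSpace 𝕜 X] [CompleteSpace X]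
    [Nontrivial X] (T : X →L[𝕜] X) (lam : 𝕜) (hlam : ‖lam‖ = 1)
    (hDE : ‖(1 : X →L[𝕜] X) + lam • T‖ = 1 + ‖T‖) :
    (starRingEnd 𝕜) lam * (‖T‖ : 𝕜) ∈ closure (numericalRange 𝕜 T) := by
  classical
  set N : ℝ := ‖T‖ with hNdef
  have hN0 : 0 ≤ N := norm_nonneg T
  -- a generic way to produce a unit vector with norming functional from a nonzero vector
  have hunit : ∀ y : X, y ≠ 0 → ∃ (x : X) (f : X →L[𝕜] 𝕜),
      ‖x‖ = 1 ∧ ‖f‖ = 1 ∧ f x = 1 ∧ x = ((‖y‖ : 𝕜))⁻¹ • y := by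
    intro y hy
    obtain ⟨f, hf1, hfy⟩ := exists_dual_vector 𝕜 y (norm_ne_zero_iff.mpr hy)
    have hny : (‖y‖ : ℝ) ≠ 0 := norm_ne_zero_iff.mpr hy
    have hnyk : ((‖y‖ : 𝕜)) ≠ 0 := by exact_mod_cast hny
    refine ⟨((‖y‖ : 𝕜))⁻¹ • y, f, ?_, hf1, ?_, rfl⟩
    · rw [norm_smul, norm_inv, RCLike.norm_ofReal, abs_of_nonneg (norm_nonneg y),
        inv_mul_cancel₀ hny]
    · rw [map_smul, smul_eq_mul, hfy, inv_mul_cancel₀ hnyk]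
  by_cases hN : N = 0
  · -- T = 0
    have hT : T = 0 := norm_eq_zero.mp hN
    obtain ⟨y, hy⟩ := exists_ne (0 : X)
    obtain ⟨x, f, hx, hf1, hfx, -⟩ := hunit y hy
    have h0 : ((N : ℝ) : 𝕜) = 0 := by rw [hN]; exact RCLike.ofReal_zero
    rw [h0, mul_zero]
    exact subset_closure ⟨x, f, hx, hf1, hfx, by rw [hT]; simp⟩
  have hNpos : 0 < N := lt_of_le_of_ne hN0 (Ne.symm hN)
  have hST : ‖lam • T‖ = N := (norm_smul lam T).trans (by rw [hlam, one_mul])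
  -- Key claim: elements of the numerical range with real part of `lam * ·` close to `N`
  have key : ∀ δ : ℝ, 0 < δ → ∃ (x : X) (f : X →L[𝕜] 𝕜),
      ‖x‖ = 1 ∧ ‖f‖ = 1 ∧ f x = 1 ∧ N - δ < RCLike.re (lam * f (T x)) := by
    intro δ hδ
    by_contra hcon
    push_neg at hcon
    set K : ℝ := N - δ with hKdef
    set α : ℝ := min 1 (min (δ / (4 * N ^ 2 + 1)) (1 / (2 * N + 1))) with hαdef
    have hα0 : 0 < α := by
      apply lt_min one_pos
      exact lt_min (by positivity) (by positivity)
    have hα1 : α ≤ 1 := min_le_left _ _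
    have hα2 : α ≤ δ / (4 * N ^ 2 + 1) := le_trans (min_le_right _ _) (min_le_left _ _)
    have hα3 : α ≤ 1 / (2 * N + 1) := le_trans (min_le_right _ _) (min_le_right _ _)
    have hαK : α * K < 1 := by
      have h1 : α * K ≤ α * N :=
        mul_le_mul_of_nonneg_left (by rw [hKdef]; linarith) hα0.le
      have h2 : α * N ≤ (1 / (2 * N + 1)) * N :=
        mul_le_mul_of_nonneg_right hα3 hN0
      have h3 : (1 / (2 * N + 1)) * N < 1 := by
        rw [div_mul_eq_mul_div, div_lt_one (by positivity)]
        linarith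
      linarith
    -- lower bound for `‖y - α • (lam • T) y‖`
    have hlow : ∀ y : X, (1 - α * K) * ‖y‖ ≤ ‖y - (α : 𝕜) • (lam • T) y‖ := by
      intro y
      rcases eq_or_ne y 0 with rfl | hy
      · simp
      obtain ⟨x, f, hx, hf1, hfx, hxy⟩ := hunit y hy
      have hny : (‖y‖ : ℝ) ≠ 0 := norm_ne_zero_iff.mpr hy
      have hre : RCLike.re (lam * f (T x)) ≤ K := hcon x f hx hf1 hfx
      have hyx : y = ((‖y‖ : 𝕜)) • x := by
        rw [hxy, smul_smul, mul_inv_cancel₀ (by exact_mod_cast hny), one_smul]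
      have hfy : f (y - (α : 𝕜) • (lam • T) y)
          = (‖y‖ : 𝕜) * (1 - (α : 𝕜) * (lam * f (T x))) := by
        rw [map_sub, map_smul, smul_eq_mul]
        conv_lhs => rw [hyx]
        simp only [ContinuousLinearMap.smul_apply, map_smul, smul_eq_mul]
        rw [hfx]
        ring
      have h1 : RCLike.re (f (y - (α : 𝕜) • (lam • T) y))
          ≤ ‖y - (α : 𝕜) • (lam • T) y‖ := by
        refine le_trans (RCLike.re_le_norm _) ?_
        calc ‖f (y - (α : 𝕜) • (lam • T) y)‖
            ≤ ‖f‖ * ‖y - (α : 𝕜) • (lam • T) y‖ := f.le_opNorm _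
          _ = ‖y - (α : 𝕜) • (lam • T) y‖ := by rw [hf1, one_mul]
      have h2 : RCLike.re (f (y - (α : 𝕜) • (lam • T) y))
          = ‖y‖ * (1 - α * RCLike.re (lam * f (T x))) := by
        rw [hfy, RCLike.re_ofReal_mul, map_sub, RCLike.one_re, RCLike.re_ofReal_mul]
      have hyn : (0 : ℝ) ≤ ‖y‖ := norm_nonneg y
      nlinarith [mul_le_mul_of_nonneg_left hre (mul_nonneg hα0.le hyn)]
    -- upper bound for the operator norm of `1 + α • (lam • T)`
    set S : X →L[𝕜] X := lam • T with hSdef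
    have hSS : ∀ z : X, ‖S z‖ ≤ N * ‖z‖ := fun z => by
      simpa [hST] using S.le_opNorm z
    have hup : ‖(1 : X →L[𝕜] X) + (α : 𝕜) • S‖
        ≤ (1 + α ^ 2 * N ^ 2) / (1 - α * K) := by
      apply ContinuousLinearMap.opNorm_le_bound _
        (div_nonneg (by positivity) (by linarith))
      intro x
      set z : X := x + (α : 𝕜) • S x with hzdef
      have hz1 : z - (α : 𝕜) • S z = x - ((α : 𝕜) * (α : 𝕜)) • S (S x) := by
        rw [hzdef, map_add, map_smul, smul_add, smul_smul]
        abel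
      have hz2 : ‖z - (α : 𝕜) • S z‖ ≤ (1 + α ^ 2 * N ^ 2) * ‖x‖ := by
        rw [hz1]
        calc ‖x - ((α : 𝕜) * (α : 𝕜)) • S (S x)‖
            ≤ ‖x‖ + ‖((α : 𝕜) * (α : 𝕜)) • S (S x)‖ := norm_sub_le _ _
          _ ≤ ‖x‖ + (α * α) * (N * (N * ‖x‖)) := by
              rw [norm_smul, norm_mul, RCLike.norm_ofReal, abs_of_nonneg hα0.le]
              have := hSS (S x)
              have h2 := hSS x
              have hNx : ‖S (S x)‖ ≤ N * (N * ‖x‖) :=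
                le_trans this (by nlinarith)
              nlinarith
          _ = (1 + α ^ 2 * N ^ 2) * ‖x‖ := by ring
      have hz3 : (1 - α * K) * ‖z‖ ≤ (1 + α ^ 2 * N ^ 2) * ‖x‖ :=
        le_trans (hlow z) hz2
      have h1αK : (0 : ℝ) < 1 - α * K := by linarith
      calc ‖((1 : X →L[𝕜] X) + (α : 𝕜) • S) x‖ = ‖z‖ := by
            simp [hzdef]
        _ ≤ (1 + α ^ 2 * N ^ 2) / (1 - α * K) * ‖x‖ := by
            rw [div_mul_eq_mul_div, le_div_iff₀ h1αK]
            nlinarith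
    -- lower bound from the Daugavet equation
    have hA : 1 + α * N ≤ ‖(1 : X →L[𝕜] X) + (α : 𝕜) • S‖ := by
      have heq : (1 : X →L[𝕜] X) + S
          = ((1 : X →L[𝕜] X) + (α : 𝕜) • S) + ((1 : 𝕜) - (α : 𝕜)) • S := by
        rw [sub_smul, one_smul]
        abel
      have hnorm : ‖((1 : 𝕜) - (α : 𝕜)) • S‖ = (1 - α) * N := by
        rw [(norm_smul ((1 : 𝕜) - (α : 𝕜)) S), hST,
          show ((1 : 𝕜) - (α : 𝕜)) = ((1 - α : ℝ) : 𝕜) by push_cast; ring,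
          RCLike.norm_ofReal, abs_of_nonneg (by linarith : (0:ℝ) ≤ 1 - α)]
      have := norm_add_le ((1 : X →L[𝕜] X) + (α : 𝕜) • S) (((1 : 𝕜) - (α : 𝕜)) • S)
      rw [← heq, hDE, hnorm] at this
      linarith
    have hfinal : (1 + α * N) * (1 - α * K) ≤ 1 + α ^ 2 * N ^ 2 := by
      have h1αK : (0 : ℝ) < 1 - α * K := by linarith
      have := le_trans hA hup
      rw [le_div_iff₀ h1αK] at this
      linarith
    exact daugavet_arith_aux hNpos hδ hα0 hα2 hKdef hfinal
  -- conclude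
  rw [Metric.mem_closure_iff]
  intro ε hε
  obtain ⟨x, f, hx, hf1, hfx, hre⟩ := key (ε ^ 2 / (2 * N)) (by positivity)
  refine ⟨f (T x), ⟨x, f, hx, hf1, hfx, rfl⟩, ?_⟩
  set v : 𝕜 := f (T x) with hvdef
  set w : 𝕜 := lam * v with hwdef
  have hconj : (starRingEnd 𝕜) lam * (N : 𝕜) - v
      = (starRingEnd 𝕜) lam * ((N : 𝕜) - w) := by
    have : (starRingEnd 𝕜) lam * lam = 1 := by
      rw [RCLike.conj_mul, hlam]; norm_num
    rw [hwdef, mul_sub, ← mul_assoc, this, one_mul]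
  have hwnorm : ‖w‖ ≤ N := by
    rw [hwdef, norm_mul, hlam, one_mul, hvdef]
    calc ‖f (T x)‖ ≤ ‖f‖ * ‖T x‖ := f.le_opNorm _
      _ ≤ 1 * (N * ‖x‖) := by
          apply mul_le_mul (le_of_eq hf1) (T.le_opNorm x) (norm_nonneg _) zero_le_one
      _ = N := by rw [hx]; ring
  have hrew : N - ε ^ 2 / (2 * N) < RCLike.re w := hre
  have hsq : ‖(N : 𝕜) - w‖ ^ 2 < ε ^ 2 := by
    have e1 : ‖(N : 𝕜) - w‖ ^ 2
        = (N - RCLike.re w) ^ 2 + RCLike.im w ^ 2 := by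
      rw [RCLike.norm_sq_eq_def, map_sub, map_sub, RCLike.ofReal_re, RCLike.ofReal_im]
      ring
    have e2 : RCLike.re w ^ 2 + RCLike.im w ^ 2 ≤ N ^ 2 := by
      rw [pow_two, pow_two, ← RCLike.norm_sq_eq_def]
      exact pow_le_pow_left₀ (norm_nonneg w) hwnorm 2
    rw [e1]
    exact daugavet_sq_aux hNpos hε e2 hrew
  have hnorm : ‖(starRingEnd 𝕜) lam * (N : 𝕜) - v‖ = ‖(N : 𝕜) - w‖ := by
    rw [hconj, norm_mul, RCLike.norm_conj, hlam, one_mul]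
  rw [dist_eq_norm, hnorm]
  exact lt_of_pow_lt_pow_left₀ 2 hε.le hsq
end

section
/- Let X be a nonzero Banach space over 𝕜 (𝕜 = ℝ or ℂ) with the Daugavet property, and let T be a bounded linear operator on X of rank at most one. Then ‖T‖·𝕋 ⊆ closure(V(T)); that is, for every λ ∈ 𝕜 with |λ| = 1, the scalar λ‖T‖ belongs to the closure of the numerical range V(T). -/
set_option maxHeartbeats 1000000 in
/-- If `X` has the Daugavet property (every operator of rank at most one satisfies the Daugavet
equation) and `T` has rank at most one, then `‖T‖ ⋅ 𝕋 ⊆ closure (V(T))`: for every modulus-one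
scalar `λ`, `λ * ‖T‖` lies in the closure of the numerical range of `T`. -/
theorem smul_norm_mem_closure_numericalRange_of_daugavetProperty
    {𝕜 X : Type*} [RCLike 𝕜] [NormedAddCommGroup X] [NormedSpace 𝕜 X] [CompleteSpace X]
    [Nontrivial X]
    (hD : ∀ S : X →L[𝕜] X, (∃ (g : X →L[𝕜] 𝕜) (y : X), S = g.smulRight y) →
      ‖(1 : X →L[𝕜] X) + S‖ = 1 + ‖S‖)
    (T : X →L[𝕜] X) (hT : ∃ (g : X →L[𝕜] 𝕜) (y : X), T = g.smulRight y) :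
    ∀ lam : 𝕜, ‖lam‖ = 1 → lam * (‖T‖ : 𝕜) ∈ closure (numericalRange 𝕜 T) := by
  intro lam hlam
  by_cases hT0 : T = 0
  · -- trivial case T = 0
    have hmem : (0 : 𝕜) ∈ numericalRange 𝕜 T := by
      obtain ⟨x0, hx0⟩ := exists_ne (0 : X)
      have hx0n : (0:ℝ) < ‖x0‖ := norm_pos_iff.mpr hx0
      set x : X := ((‖x0‖ : 𝕜))⁻¹ • x0 with hxdef
      have hx : ‖x‖ = 1 := by
        rw [hxdef, norm_smul, norm_inv, RCLike.norm_ofReal, abs_of_pos hx0n]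
        field_simp
      have hxne : x ≠ 0 := by
        intro h; rw [h] at hx; simp at hx
      obtain ⟨f, hf1, hfx⟩ := exists_dual_vector 𝕜 x (norm_ne_zero_iff.mpr hxne)
      exact ⟨x, f, hx, hf1, by rw [hfx, hx]; simp, by simp [hT0]⟩
    have : lam * (‖T‖ : 𝕜) = 0 := by simp [hT0]
    rw [this]
    exact subset_closure hmem
  · by_contra hcl
    have hr0 : (0:ℝ) < ‖T‖ := by
      rcases (norm_nonneg T).lt_or_eq with h | h
      · exact h
      · exact absurd (ContinuousLinearMap.opNorm_zero_iff T |>.mp h.symm) hT0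
    set r : ℝ := ‖T‖ with hrdef
    rw [Metric.mem_closure_iff] at hcl
    push_neg at hcl
    obtain ⟨δ, hδ, hdist⟩ := hcl
    set ε : ℝ := δ^2/(2*r) with hεdef
    clear_value ε
    have hε : 0 < ε := by rw [hεdef]; positivity
    set α : ℝ := r - ε with hαdef
    clear_value α
    -- Step A: every norming pair gives Re(conj lam * f(Tx)) ≤ α
    have hA : ∀ (x : X) (f : X →L[𝕜] 𝕜), ‖x‖ = 1 → ‖f‖ = 1 → f x = 1 →
        RCLike.re ((starRingEnd 𝕜) lam * f (T x)) ≤ α := by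
      intro x f hx hf hfx
      have hmem : f (T x) ∈ numericalRange 𝕜 T := ⟨x, f, hx, hf, hfx, rfl⟩
      have hd := hdist _ hmem
      rw [dist_eq_norm] at hd
      set w : 𝕜 := f (T x) with hwdef
      have hw : ‖w‖ ≤ r := by
        calc ‖w‖ ≤ ‖f‖ * ‖T x‖ := f.le_opNorm _
        _ ≤ 1 * (‖T‖ * ‖x‖) := by
            rw [hf]; gcongr; exact T.le_opNorm x
        _ = r := by rw [hx]; ring
      -- square expansion in the inner product space 𝕜 over 𝕜
      have hsq : ‖lam * (r:𝕜) - w‖^2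
          = ‖lam * (r:𝕜)‖^2 - 2 * RCLike.re (inner 𝕜 (lam * (r:𝕜)) w : 𝕜) + ‖w‖^2 :=
        norm_sub_sq _ _
      have hnormu : ‖lam * (r:𝕜)‖ = r := by
        rw [norm_mul, hlam, RCLike.norm_ofReal, abs_of_pos hr0, one_mul]
      have hinner : RCLike.re (inner 𝕜 (lam * (r:𝕜)) w : 𝕜)
          = r * RCLike.re ((starRingEnd 𝕜) lam * w) := by
        have h1 : (inner 𝕜 (lam * (r:𝕜)) w : 𝕜) = (r:𝕜) * ((starRingEnd 𝕜) lam * w) := by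
          rw [RCLike.inner_apply, map_mul, RCLike.conj_ofReal]; ring
        rw [h1]
        exact RCLike.re_ofReal_mul _ _
      have hd2 : δ ≤ ‖lam * (r:𝕜) - w‖ := hd
      have hwnn : (0:ℝ) ≤ ‖w‖ := norm_nonneg _
      set β : ℝ := RCLike.re ((starRingEnd 𝕜) lam * w) with hβdef
      have key : δ^2 ≤ 2*r*(r - β) := by
        nlinarith [hsq, hnormu, hinner, hd2, hw, hwnn, hδ]
      have h2r : (0:ℝ) < 2*r := by positivity
      have hdiv : δ^2/(2*r) ≤ r - β := by
        rw [div_le_iff₀ h2r]; nlinarith [key]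
      rw [hαdef, hεdef]; linarith
    -- choose t
    obtain ⟨g, y, hgy⟩ := hT
    set t : ℝ := min (1/(4*r)) (ε/(4*r^2)) with htdef
    clear_value t
    have ht0 : 0 < t := by
      rw [htdef]
      exact lt_min (div_pos one_pos (by linarith)) (div_pos hε (by nlinarith [hr0]))
    have htr : t * r ≤ 1/4 := by
      have h1 : t ≤ 1/(4*r) := by rw [htdef]; exact min_le_left _ _
      calc t * r ≤ (1/(4*r)) * r := by gcongr
      _ = 1/4 := by field_simp
    have htε : t ≤ ε/(4*r^2) := by rw [htdef]; exact min_le_right _ _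
    set c : 𝕜 := (t:𝕜) * (starRingEnd 𝕜) lam with hcdef
    clear_value c
    set a : X →L[𝕜] X := c • T with hadef
    clear_value a
    have hca : ‖a‖ = t * r := by
      have hc : ‖c‖ = t := by
        rw [hcdef, norm_mul, RCLike.norm_ofReal, RCLike.norm_conj, hlam,
          abs_of_pos ht0, mul_one]
      calc ‖a‖ = ‖c • T‖ := by rw [hadef]
      _ = ‖c‖ * ‖T‖ := norm_smul c T
      _ = t * r := by rw [hc]
    have hrank : ∃ (g' : X →L[𝕜] 𝕜) (y' : X), a = g'.smulRight y' := by
      refine ⟨c • g, y, ?_⟩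
      ext x
      simp [hadef, hgy, smul_smul]
    have hdaug : ‖(1 : X →L[𝕜] X) + a‖ = 1 + t * r := by rw [hD a hrank, hca]
    have hαr : α ≤ r := by rw [hαdef]; linarith
    have htα : t * α ≤ 1/4 := by
      rcases le_or_gt α 0 with h | h
      · nlinarith
      · calc t * α ≤ t * r := by gcongr
        _ ≤ 1/4 := htr
    have hpos : (0:ℝ) < 1 - t * α := by linarith
    -- lower bound ‖(1-a) x‖ ≥ (1 - tα) ‖x‖
    have hlow : ∀ x : X, (1 - t*α) * ‖x‖ ≤ ‖x - a x‖ := by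
      intro x
      rcases eq_or_ne x 0 with h0 | h0
      · simp [h0]
      obtain ⟨f, hf1, hfx⟩ := exists_dual_vector 𝕜 x (norm_ne_zero_iff.mpr h0)
      have hxpos : (0:ℝ) < ‖x‖ := norm_pos_iff.mpr h0
      set xu : X := ((‖x‖ : 𝕜))⁻¹ • x with hxudef
      have hxu : ‖xu‖ = 1 := by
        rw [hxudef, norm_smul, norm_inv, RCLike.norm_ofReal, abs_of_pos hxpos]
        field_simp
      have hfxu : f xu = 1 := by
        rw [hxudef, map_smul, hfx, smul_eq_mul]
        rw [inv_mul_cancel₀]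
        exact_mod_cast (RCLike.ofReal_ne_zero).mpr hxpos.ne'
      have hAx := hA xu f hxu hf1 hfxu
      have hTxu : f (T xu) = ((‖x‖:𝕜))⁻¹ * f (T x) := by
        rw [hxudef, map_smul, map_smul, smul_eq_mul]
      have hre : RCLike.re ((starRingEnd 𝕜) lam * f (T x)) ≤ α * ‖x‖ := by
        have : RCLike.re ((starRingEnd 𝕜) lam * f (T xu))
            = ‖x‖⁻¹ * RCLike.re ((starRingEnd 𝕜) lam * f (T x)) := by
          rw [hTxu, show (starRingEnd 𝕜) lam * (((‖x‖:𝕜))⁻¹ * f (T x))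
            = ((‖x‖⁻¹ : ℝ):𝕜) * ((starRingEnd 𝕜) lam * f (T x)) by push_cast; ring]
          exact RCLike.re_ofReal_mul _ _
        rw [this] at hAx
        calc RCLike.re ((starRingEnd 𝕜) lam * f (T x))
            = ‖x‖ * (‖x‖⁻¹ * RCLike.re ((starRingEnd 𝕜) lam * f (T x))) := by
              field_simp
        _ ≤ ‖x‖ * α := by
              apply mul_le_mul_of_nonneg_left hAx hxpos.le
        _ = α * ‖x‖ := by ring
      have hfax : RCLike.re (f (a x)) ≤ t * (α * ‖x‖) := by
        have hfa : f (a x) = (t:𝕜) * ((starRingEnd 𝕜) lam * f (T x)) := by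
          rw [hadef]
          simp only [ContinuousLinearMap.smul_apply, map_smul, smul_eq_mul, hcdef]
          ring
        rw [hfa, RCLike.re_ofReal_mul]
        exact mul_le_mul_of_nonneg_left hre ht0.le
      have h1 : RCLike.re (f (x - a x)) ≤ ‖x - a x‖ := by
        calc RCLike.re (f (x - a x)) ≤ ‖f (x - a x)‖ := RCLike.re_le_norm _
        _ ≤ ‖f‖ * ‖x - a x‖ := f.le_opNorm _
        _ = ‖x - a x‖ := by rw [hf1, one_mul]
      have h2 : RCLike.re (f (x - a x)) = ‖x‖ - RCLike.re (f (a x)) := by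
        rw [map_sub]
        rw [show f x - f (a x) = ((‖x‖:𝕜)) - f (a x) by rw [hfx]]
        rw [map_sub, RCLike.ofReal_re]
      nlinarith [h1, h2, hfax]
    -- invertibility
    have hnorm_a : ‖a‖ < 1 := by rw [hca]; linarith
    set u : (X →L[𝕜] X)ˣ := Units.oneSub a hnorm_a with hudef
    have huval : (u : X →L[𝕜] X) = 1 - a := rfl
    have hinv : ∀ z : X, ‖(↑u⁻¹ : X →L[𝕜] X) z‖ ≤ (1 - t*α)⁻¹ * ‖z‖ := by
      intro z
      set w : X := (↑u⁻¹ : X →L[𝕜] X) z with hwdef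
      have h1 : (↑u : X →L[𝕜] X) w = z := by
        rw [hwdef, ← ContinuousLinearMap.mul_apply, u.mul_inv, ContinuousLinearMap.one_apply]
      have h2 : w - a w = z := by
        rw [← h1, huval]; simp [sub_smul]
      have h3 := hlow w
      rw [h2] at h3
      calc ‖w‖ = (1 - t*α)⁻¹ * ((1 - t*α) * ‖w‖) := by field_simp
      _ ≤ (1 - t*α)⁻¹ * ‖z‖ := by
          apply mul_le_mul_of_nonneg_left h3 (by positivity)
    have hub : ‖(1 : X →L[𝕜] X) + a‖ ≤ (1 + (t*r)^2) * (1 - t*α)⁻¹ := by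
      apply ContinuousLinearMap.opNorm_le_bound _ (by positivity)
      intro z
      have hfac : (1 : X →L[𝕜] X) + a = (1 - a*a) * ↑u⁻¹ := by
        have h := u.mul_inv
        calc (1 : X →L[𝕜] X) + a = ((1+a) * (↑u : X →L[𝕜] X)) * ↑u⁻¹ := by
              rw [mul_assoc, h, mul_one]
        _ = (1 - a*a) * ↑u⁻¹ := by
              rw [huval]; congr 1; noncomm_ring
      rw [hfac, ContinuousLinearMap.mul_apply]
      calc ‖(1 - a*a : X →L[𝕜] X) ((↑u⁻¹ : X →L[𝕜] X) z)‖
          ≤ ‖(1 - a*a : X →L[𝕜] X)‖ * ‖(↑u⁻¹ : X →L[𝕜] X) z‖ :=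
            ContinuousLinearMap.le_opNorm _ _
      _ ≤ (1 + (t*r)^2) * ((1 - t*α)⁻¹ * ‖z‖) := by
            apply mul_le_mul _ (hinv z) (norm_nonneg _) (by positivity)
            calc ‖(1 - a*a : X →L[𝕜] X)‖ ≤ ‖(1 : X →L[𝕜] X)‖ + ‖a*a‖ := norm_sub_le _ _
            _ ≤ 1 + ‖a‖ * ‖a‖ := by
                  gcongr
                  · rw [ContinuousLinearMap.one_def, ContinuousLinearMap.norm_id]
                  · exact norm_mul_le _ _
            _ = 1 + (t*r)^2 := by rw [hca]; ring
      _ = (1 + (t*r)^2) * (1 - t*α)⁻¹ * ‖z‖ := by ring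
    -- contradiction
    rw [hdaug] at hub
    have hfin : (1 + t*r) * (1 - t*α) ≤ 1 + (t*r)^2 := by
      have := mul_le_mul_of_nonneg_right hub hpos.le
      rw [mul_assoc, inv_mul_cancel₀ hpos.ne', mul_one] at this
      exact this
    rw [hαdef] at hfin
    have htε2 : 4*r^2*t ≤ ε := by
      have h := (le_div_iff₀ (by nlinarith [hr0] : (0:ℝ) < 4*r^2)).mp htε
      linarith [h]
    nlinarith [hfin, ht0, hε, hr0, mul_pos ht0 hε,
      mul_le_mul_of_nonneg_left htε2 ht0.le,
      mul_nonneg (mul_nonneg ht0.le ht0.le) (mul_nonneg hr0.le hε.le)]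
end

section
/- Let Y and Z be Banach spaces over 𝕜 (𝕜 = ℝ or ℂ) with Y ≠ {0}, and let X = Y ⊕₁ Z be their ℓ₁-direct sum, i.e., the product Y × Z with norm ‖(y,z)‖ = ‖y‖ + ‖z‖. Given a bounded linear operator S on Y, define T on X by T(y,z) = (S y, 0). Then ‖T‖ = ‖S‖ and V(T) ⊆ { t·μ : t ∈ [0,1], μ ∈ V(S) }. -/
section aux
variable {𝕜 Y Z : Type*} [RCLike 𝕜] [NormedAddCommGroup Y] [NormedSpace 𝕜 Y]
    [NormedAddCommGroup Z] [NormedSpace 𝕜 Z]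

lemma l1_norm_eq (x : WithLp 1 (Y × Z)) : ‖x‖ = ‖x.fst‖ + ‖x.snd‖ := by
  rw [WithLp.prod_norm_eq_add (by norm_num)]
  norm_num

noncomputable def iotaY : Y →L[𝕜] WithLp 1 (Y × Z) :=
  ((WithLp.prodContinuousLinearEquiv 1 𝕜 Y Z).symm : Y × Z →L[𝕜] WithLp 1 (Y × Z)).comp
    (ContinuousLinearMap.inl 𝕜 Y Z)

lemma iotaY_apply (y : Y) : (iotaY (𝕜 := 𝕜) (Z := Z) y) = (WithLp.equiv 1 (Y × Z)).symm (y, 0) :=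
  rfl

lemma norm_iotaY (y : Y) : ‖(iotaY (𝕜 := 𝕜) (Z := Z) y)‖ = ‖y‖ := by
  rw [l1_norm_eq]; simp [iotaY_apply]

end aux

/-- Let `X = Y ⊕₁ Z` be the `ℓ₁`-direct sum of `Y` and `Z`, with `Y ≠ 0`. If `S ∈ L(Y)` and
`T ∈ L(X)` is given by `T (y, z) = (S y, 0)`, then `‖T‖ = ‖S‖` and
`V(T) ⊆ [0,1] ⬝ V(S)`. -/
theorem norm_eq_and_numericalRange_subset_of_l1_sum_extension
    {𝕜 Y Z : Type*} [RCLike 𝕜] [NormedAddCommGroup Y] [NormedSpace 𝕜 Y] [CompleteSpace Y]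
    [NormedAddCommGroup Z] [NormedSpace 𝕜 Z] [CompleteSpace Z] [Nontrivial Y]
    (S : Y →L[𝕜] Y) (T : WithLp 1 (Y × Z) →L[𝕜] WithLp 1 (Y × Z))
    (hT : ∀ p : WithLp 1 (Y × Z),
      WithLp.equiv 1 (Y × Z) (T p) = (S (WithLp.equiv 1 (Y × Z) p).1, (0 : Z))) :
    ‖T‖ = ‖S‖ ∧
      numericalRange 𝕜 T ⊆
        {c : 𝕜 | ∃ t ∈ Set.Icc (0 : ℝ) 1, ∃ μ ∈ numericalRange 𝕜 S, c = (t : 𝕜) * μ} := by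
  -- key: T p = ι (S p.1)
  have hT' : ∀ p : WithLp 1 (Y × Z), T p = iotaY (𝕜 := 𝕜) (Z := Z) (S p.fst) := by
    intro p
    have := hT p
    apply (WithLp.equiv 1 (Y × Z)).injective
    rw [this, iotaY_apply]
    simp
  have hTnorm : ∀ p : WithLp 1 (Y × Z), ‖T p‖ = ‖S p.fst‖ := by
    intro p; rw [hT' p, norm_iotaY]
  constructor
  · apply le_antisymm
    · apply ContinuousLinearMap.opNorm_le_bound _ (norm_nonneg S)
      intro p
      rw [hTnorm p, l1_norm_eq]
      calc ‖S p.fst‖ ≤ ‖S‖ * ‖p.fst‖ := S.le_opNorm _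
        _ ≤ ‖S‖ * (‖p.fst‖ + ‖p.snd‖) := by
            apply mul_le_mul_of_nonneg_left _ (norm_nonneg S)
            linarith [norm_nonneg p.snd]
    · apply ContinuousLinearMap.opNorm_le_bound _ (norm_nonneg T)
      intro y
      have : S y = (T (iotaY (𝕜 := 𝕜) (Z := Z) y)).fst := by rw [hT' (iotaY (𝕜 := 𝕜) (Z := Z) y)]; simp [iotaY_apply]
      rw [this]
      calc ‖(T (iotaY (𝕜 := 𝕜) (Z := Z) y)).fst‖ ≤ ‖T (iotaY (𝕜 := 𝕜) (Z := Z) y)‖ := by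
            rw [l1_norm_eq]; linarith [norm_nonneg (T (iotaY (𝕜 := 𝕜) (Z := Z) y)).snd]
        _ ≤ ‖T‖ * ‖iotaY (𝕜 := 𝕜) (Z := Z) y‖ := T.le_opNorm _
        _ = ‖T‖ * ‖y‖ := by rw [norm_iotaY]
  · rintro lam ⟨x, f, hx, hf, hfx, hlam⟩
    set g : Y →L[𝕜] 𝕜 := f.comp (iotaY (𝕜 := 𝕜) (Z := Z)) with hg
    have hgle : ‖g‖ ≤ 1 := by
      apply ContinuousLinearMap.opNorm_le_bound _ zero_le_one
      intro y
      calc ‖g y‖ ≤ ‖f‖ * ‖iotaY (𝕜 := 𝕜) (Z := Z) y‖ := f.le_opNorm _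
        _ = 1 * ‖y‖ := by rw [hf, norm_iotaY]
    have hlam' : lam = g (S x.fst) := by rw [hlam, hT' x]; rfl
    by_cases hy : x.fst = 0
    · -- lam = 0, use nonemptiness of V(S)
      obtain ⟨y0, hy0⟩ := exists_ne (0 : Y)
      set y1 : Y := ((‖y0‖ : 𝕜))⁻¹ • y0 with hy1
      have hy1n : ‖y1‖ = 1 := by
        rw [hy1, norm_smul, norm_inv, RCLike.norm_ofReal, abs_of_pos (norm_pos_iff.mpr hy0), inv_mul_cancel₀ (norm_ne_zero_iff.mpr hy0)]
      obtain ⟨g0, hg0, hg0y⟩ := exists_dual_vector 𝕜 y1 (by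
        intro h; rw [h] at hy1n; norm_num at hy1n)
      refine ⟨0, ⟨le_refl 0, zero_le_one⟩, g0 (S y1), ⟨y1, g0, hy1n, hg0, by rw [hg0y, hy1n]; simp, rfl⟩, ?_⟩
      rw [hlam', hy]
      simp
    · -- lam = ‖x.fst‖ * g (S y'), y' = normalized
      set t := ‖x.fst‖ with ht
      have htpos : 0 < t := norm_pos_iff.mpr hy
      set y' : Y := ((t : 𝕜))⁻¹ • x.fst with hy'
      have hy'n : ‖y'‖ = 1 := by
        rw [hy', norm_smul, norm_inv, RCLike.norm_ofReal, abs_of_pos htpos, inv_mul_cancel₀ htpos.ne']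
      -- f x = g x.fst + f (0, x.snd)
      have hxsplit : x = iotaY (𝕜 := 𝕜) (Z := Z) x.fst + (WithLp.equiv 1 (Y × Z)).symm (0, x.snd) := by
        apply (WithLp.equiv 1 (Y × Z)).injective
        simp [iotaY_apply]
        rfl
      have hfsplit : f x = g x.fst + f ((WithLp.equiv 1 (Y × Z)).symm (0, x.snd)) := by
        conv_lhs => rw [hxsplit]
        rw [map_add]; rfl
      -- real parts
      have hnorm1 : t + ‖x.snd‖ = 1 := by rw [ht, ← l1_norm_eq, hx]
      have hgre : RCLike.re (g x.fst) ≤ t := by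
        calc RCLike.re (g x.fst) ≤ ‖g x.fst‖ := RCLike.re_le_norm _
          _ ≤ ‖g‖ * ‖x.fst‖ := g.le_opNorm _
          _ ≤ 1 * t := mul_le_mul_of_nonneg_right hgle (norm_nonneg _)
          _ = t := one_mul t
      have hzre : RCLike.re (f ((WithLp.equiv 1 (Y × Z)).symm (0, x.snd))) ≤ ‖x.snd‖ := by
        calc RCLike.re (f ((WithLp.equiv 1 (Y × Z)).symm (0, x.snd)))
            ≤ ‖f ((WithLp.equiv 1 (Y × Z)).symm (0, x.snd))‖ := RCLike.re_le_norm _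
          _ ≤ ‖f‖ * ‖(WithLp.equiv 1 (Y × Z)).symm (0, x.snd)‖ := f.le_opNorm _
          _ = ‖x.snd‖ := by rw [hf, one_mul, l1_norm_eq]; simp
      have hresum : RCLike.re (g x.fst) + RCLike.re (f ((WithLp.equiv 1 (Y × Z)).symm (0, x.snd))) = 1 := by
        rw [← map_add, ← hfsplit, hfx]; simp
      have hgret : RCLike.re (g x.fst) = t := by linarith
      -- |g x.fst| ≤ t and re = t forces g x.fst = t
      have hgnorm : ‖g x.fst‖ ≤ t := by
        calc ‖g x.fst‖ ≤ ‖g‖ * ‖x.fst‖ := g.le_opNorm _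
          _ ≤ 1 * t := mul_le_mul_of_nonneg_right hgle (norm_nonneg _)
          _ = t := one_mul t
      have hgval : g x.fst = (t : 𝕜) := by
        have him : RCLike.im (g x.fst) = 0 := by
          by_contra him
          have h0 : ‖g x.fst‖ ^ 2 ≤ t ^ 2 := by
            apply sq_le_sq' _ hgnorm
            linarith [norm_nonneg (g x.fst)]
          rw [RCLike.norm_sq_eq_def] at h0
          have h1 : RCLike.re (g x.fst) ^ 2 + RCLike.im (g x.fst) ^ 2 ≤ t ^ 2 := by
            nlinarith [h0]
          have h2 : 0 < RCLike.im (g x.fst) ^ 2 := by positivity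
          rw [hgret] at h1; linarith
        apply RCLike.ext
        · rw [hgret]; simp
        · rw [him]; simp
      -- g y' = 1
      have hgy' : g y' = 1 := by
        rw [hy', map_smul, hgval, smul_eq_mul]
        exact inv_mul_cancel₀ (by exact_mod_cast htpos.ne')
      have hgnorm1 : ‖g‖ = 1 := by
        apply le_antisymm hgle
        calc (1 : ℝ) = ‖g y'‖ := by rw [hgy']; simp
          _ ≤ ‖g‖ * ‖y'‖ := g.le_opNorm _
          _ = ‖g‖ := by rw [hy'n, mul_one]
      have ht1 : t ≤ 1 := by linarith [norm_nonneg x.snd]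
      refine ⟨t, ⟨htpos.le, ht1⟩, g (S y'), ⟨y', g, hy'n, hgnorm1, hgy', rfl⟩, ?_⟩
      rw [hlam']
      have : x.fst = ((t : 𝕜)) • y' := by
        rw [hy', smul_smul, mul_inv_cancel₀ (by exact_mod_cast htpos.ne' : (t : 𝕜) ≠ 0), one_smul]
      rw [this, map_smul, map_smul, smul_eq_mul]
end

section
/- Let Δ be a closed subset of [0,1] whose complement [0,1] \ Δ is dense in [0,1], and let E be a closed subspace of C(Δ,𝕜), 𝕜 = ℝ or ℂ. Then the subspace X = { f ∈ C([0,1],𝕜) : f|_Δ ∈ E } is a C-rich closed subspace of C([0,1],𝕜). -/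
set_option synthInstance.maxHeartbeats 1000000
set_option maxHeartbeats 1000000

/-- A closed subspace `X` of `C(K, 𝕜)` is C-rich if for every nonempty open set `U ⊆ K` and
every `ε > 0` there is a continuous function `h : K → [0,1]` of norm one with support inside `U`
whose distance to `X` is less than `ε`. -/
def CRich (𝕜 : Type*) [RCLike 𝕜] {K : Type*} [TopologicalSpace K] [CompactSpace K]
    (X : Submodule 𝕜 C(K, 𝕜)) : Prop :=
  ∀ U : Set K, IsOpen U → U.Nonempty → ∀ ε : ℝ, 0 < ε →
    ∃ h : C(K, ℝ), (∀ t, h t ∈ Set.Icc (0 : ℝ) 1) ∧ ‖h‖ = 1 ∧ tsupport ⇑h ⊆ U ∧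
      ∃ g ∈ X, ‖(⟨fun t => ((h t : ℝ) : 𝕜), RCLike.continuous_ofReal.comp h.continuous⟩
        : C(K, 𝕜)) - g‖ < ε

/-- Restriction to a subset `Δ ⊆ [0,1]`, as a linear map `C([0,1], 𝕜) →ₗ[𝕜] C(Δ, 𝕜)`. -/
def restrictLM (𝕜 : Type*) [RCLike 𝕜] (Δ : Set unitInterval) :
    C(unitInterval, 𝕜) →ₗ[𝕜] C(Δ, 𝕜) where
  toFun f := f.restrict Δ
  map_add' _ _ := rfl
  map_smul' _ _ := rfl

/-- If `Δ ⊆ [0,1]` is closed with dense complement and `E` is a closed subspace of `C(Δ, 𝕜)`,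
then `X = { f ∈ C([0,1], 𝕜) : f|_Δ ∈ E }` is a C-rich closed subspace of `C([0,1], 𝕜)`. -/
theorem isClosed_and_cRich_of_restriction_subspace
    {𝕜 : Type*} [RCLike 𝕜] (Δ : Set unitInterval) (hΔ : IsClosed Δ) (hdense : Dense Δᶜ)
    (E : Submodule 𝕜 C(Δ, 𝕜)) (hE : IsClosed (E : Set C(Δ, 𝕜))) :
    IsClosed ((E.comap (restrictLM 𝕜 Δ) : Submodule 𝕜 C(unitInterval, 𝕜)) :
        Set C(unitInterval, 𝕜)) ∧
      CRich 𝕜 (E.comap (restrictLM 𝕜 Δ)) := by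
  constructor
  · exact hE.preimage (ContinuousMap.continuous_restrict Δ)
  · intro U hU hUne ε hε
    -- pick a point of U not in Δ
    have hUΔ : (U ∩ Δᶜ).Nonempty := hdense.inter_open_nonempty U hU hUne
    obtain ⟨t₀, ht₀U, ht₀Δ⟩ := hUΔ
    have hopen : IsOpen (U ∩ Δᶜ) := hU.inter hΔ.isOpen_compl
    obtain ⟨h, hsupp, hone, hmem⟩ :=
      exists_tsupport_one_of_isOpen_isClosed (X := unitInterval) hopen
        (IsCompact.closure_of_subset isCompact_univ (Set.subset_univ _))
        isClosed_singleton (Set.singleton_subset_iff.mpr ⟨ht₀U, ht₀Δ⟩)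
    have ht₀ : h t₀ = 1 := hone rfl
    refine ⟨h, hmem, ?_, hsupp.trans Set.inter_subset_left, ?_⟩
    · apply le_antisymm
      · apply (ContinuousMap.norm_le _ zero_le_one).mpr
        intro x
        rw [Real.norm_eq_abs, abs_le]
        have := (hmem x).1; have := (hmem x).2; constructor <;> linarith
      · calc (1 : ℝ) = ‖h t₀‖ := by rw [ht₀]; simp
          _ ≤ ‖h‖ := h.norm_coe_le_norm t₀
    · set hc : C(unitInterval, 𝕜) :=
        ⟨fun t => ((h t : ℝ) : 𝕜), RCLike.continuous_ofReal.comp h.continuous⟩ with hhc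
      refine ⟨hc, ?_, by simpa using hε⟩
      have : restrictLM 𝕜 Δ hc = 0 := by
        ext x
        have hx : (x : unitInterval) ∉ tsupport ⇑h := fun hmem' =>
          (hsupp hmem').2 x.2
        have : h x = 0 := image_eq_zero_of_notMem_tsupport hx
        simp [restrictLM, hc, ContinuousMap.restrict, this]
      simp only [Submodule.mem_comap, this]
      exact E.zero_mem
end

section
/- There exists a real Banach space X with the following two properties: (1) every nonzero dissipative bounded linear operator T on X fixes a copy of ℓ₁; (2) there is an infinite linearly independent family of finite-rank dissipative bounded linear operators on the dual X*. -/
open Filter Topology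

noncomputable section

namespace DissipCantor

open scoped Classical

abbrev KS : Type := ℕ → Bool
abbrev XS : Type := C(KS, ℝ)

/-! ### Cells -/

def cell (t : KS) (k : ℕ) : Set KS := {x | ∀ i, i < k → x i = t i}

lemma self_mem_cell (t : KS) (k : ℕ) : t ∈ cell t k := fun _ _ => rfl

lemma cell_zero (t : KS) : cell t 0 = Set.univ := by
  ext x; simp [cell]

lemma cell_antitone {t : KS} {k m : ℕ} (h : k ≤ m) : cell t m ⊆ cell t k :=
  fun x hx i hi => hx i (lt_of_lt_of_le hi h)

lemma cell_eq_of_mem {t x : KS} {k : ℕ} (h : x ∈ cell t k) : cell x k = cell t k := by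
  ext y
  constructor
  · intro hy i hi; rw [hy i hi]; exact h i hi
  · intro hy i hi; rw [hy i hi]; exact (h i hi).symm

lemma isOpen_cell (t : KS) (k : ℕ) : IsOpen (cell t k) := by
  have : cell t k = ⋂ i ∈ Finset.range k, (fun x : KS => x i) ⁻¹' {t i} := by
    ext x; simp [cell]
  rw [this]
  exact isOpen_biInter_finset fun i _ => (continuous_apply i).isOpen_preimage _ (isOpen_discrete _)

lemma exists_cell_subset {U : Set KS} {t : KS} (hU : IsOpen U) (ht : t ∈ U) :
    ∃ k, cell t k ⊆ U := by
  obtain ⟨I, u, hIu, hpi⟩ := isOpen_pi_iff.mp hU t ht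
  refine ⟨(I.sup id) + 1, fun x hx => hpi ?_⟩
  intro a ha
  have h1 : a < I.sup id + 1 := Nat.lt_succ_of_le (Finset.le_sup (f := id) ha)
  rw [hx a h1]
  exact (hIu a ha).2

/-! ### Indicator functions of cells -/

lemma continuous_chiFun (t : KS) (k : ℕ) :
    Continuous fun x : KS => if x ∈ cell t k then (1 : ℝ) else 0 := by
  have heq : (fun x : KS => if x ∈ cell t k then (1 : ℝ) else 0)
      = fun x => ∏ i ∈ Finset.range k, (if x i = t i then (1 : ℝ) else 0) := by
    funext x
    by_cases h : x ∈ cell t k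
    · rw [if_pos h, eq_comm]
      exact Finset.prod_eq_one fun i hi => if_pos (h i (Finset.mem_range.mp hi))
    · rw [if_neg h, eq_comm]
      have h' : ∃ i, i < k ∧ x i ≠ t i := by
        by_contra hc
        push_neg at hc
        exact h fun i hi => hc i hi
      obtain ⟨i, hi, hne⟩ := h'
      exact Finset.prod_eq_zero (Finset.mem_range.mpr hi) (if_neg hne)
  rw [heq]
  apply continuous_finset_prod
  intro i _
  exact (continuous_of_discreteTopology
    (f := fun b : Bool => if b = t i then (1 : ℝ) else 0)).comp (continuous_apply i)

def chi (t : KS) (k : ℕ) : XS :=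
  ⟨fun x => if x ∈ cell t k then (1 : ℝ) else 0, continuous_chiFun t k⟩

lemma chi_apply (t : KS) (k : ℕ) (x : KS) :
    chi t k x = if x ∈ cell t k then (1 : ℝ) else 0 := rfl

lemma chi_apply_of_mem {t x : KS} {k : ℕ} (h : x ∈ cell t k) : chi t k x = 1 := by
  simp [chi_apply, h]

lemma chi_apply_of_not_mem {t x : KS} {k : ℕ} (h : x ∉ cell t k) : chi t k x = 0 := by
  simp [chi_apply, h]

lemma chi_norm_le (t : KS) (k : ℕ) : ‖chi t k‖ ≤ 1 := by
  rw [ContinuousMap.norm_le _ zero_le_one]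
  intro x
  rw [chi_apply]
  split <;> simp

/-! ### Point evaluations -/

def dirac (t : KS) : StrongDual ℝ XS :=
  LinearMap.mkContinuous
    { toFun := fun f => f t
      map_add' := by intros; simp
      map_smul' := by intros; simp }
    1 (fun f => by simpa using f.norm_coe_le_norm t)

@[simp] lemma dirac_apply (t : KS) (f : XS) : dirac t f = f t := rfl

lemma norm_one_XS : ‖(1 : XS)‖ = 1 := by
  refine le_antisymm ((ContinuousMap.norm_le _ zero_le_one).mpr fun x => by simp) ?_
  have := (1 : XS).norm_coe_le_norm (fun _ => false)
  simpa using this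

lemma norm_dirac (t : KS) : ‖dirac t‖ = 1 := by
  refine le_antisymm (LinearMap.mkContinuous_norm_le _ zero_le_one _) ?_
  have h := (dirac t).le_opNorm (1 : XS)
  rw [norm_one_XS, mul_one] at h
  simpa using h

section Operator

variable (T : XS →L[ℝ] XS)

/-! ### Local variation -/

def VarSet (s : KS) (A : Set KS) : Set ℝ :=
  {r | ∃ g : XS, ‖g‖ ≤ 1 ∧ (∀ x, x ∉ A → g x = 0) ∧ (∃ m, ∀ x ∈ cell s m, g x = 0) ∧ r = T g s}

def Var (s : KS) (A : Set KS) : ℝ := sSup (VarSet T s A)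

lemma zero_mem_VarSet (s : KS) (A : Set KS) : (0 : ℝ) ∈ VarSet T s A := by
  refine ⟨0, by simp, by simp, ⟨0, by simp⟩, by simp⟩

lemma VarSet_le (s : KS) (A : Set KS) {r : ℝ} (hr : r ∈ VarSet T s A) : r ≤ ‖T‖ := by
  obtain ⟨g, hg1, _, _, rfl⟩ := hr
  calc T g s ≤ ‖T g‖ := le_trans (le_abs_self _) ((T g).norm_coe_le_norm s)
    _ ≤ ‖T‖ * ‖g‖ := T.le_opNorm g
    _ ≤ ‖T‖ := by nlinarith [norm_nonneg (T : XS →L[ℝ] XS)]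

lemma VarSet_bddAbove (s : KS) (A : Set KS) : BddAbove (VarSet T s A) :=
  ⟨‖T‖, fun _ hr => VarSet_le T s A hr⟩

lemma Var_nonneg (s : KS) (A : Set KS) : 0 ≤ Var T s A :=
  le_csSup (VarSet_bddAbove T s A) (zero_mem_VarSet T s A)

lemma Var_le_normT (s : KS) (A : Set KS) : Var T s A ≤ ‖T‖ :=
  csSup_le ⟨0, zero_mem_VarSet T s A⟩ (fun _ hr => VarSet_le T s A hr)

lemma le_Var {s : KS} {A : Set KS} {g : XS} (hg1 : ‖g‖ ≤ 1) (hg2 : ∀ x, x ∉ A → g x = 0)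
    (hg3 : ∃ m, ∀ x ∈ cell s m, g x = 0) : T g s ≤ Var T s A :=
  le_csSup (VarSet_bddAbove T s A) ⟨g, hg1, hg2, hg3, rfl⟩

lemma le_Var_scaled {s : KS} {A : Set KS} {g : XS} {C : ℝ} (hC : 0 < C) (hg1 : ‖g‖ ≤ C)
    (hg2 : ∀ x, x ∉ A → g x = 0) (hg3 : ∃ m, ∀ x ∈ cell s m, g x = 0) :
    T g s ≤ C * Var T s A := by
  have hbase : T (C⁻¹ • g) s ≤ Var T s A := by
    apply le_Var T
    · rw [ContinuousMap.norm_le _ zero_le_one]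
      intro x
      rw [ContinuousMap.smul_apply, smul_eq_mul, Real.norm_eq_abs, abs_mul, abs_inv]
      rw [abs_of_pos hC]
      have hgx : |g x| ≤ C := le_trans (g.norm_coe_le_norm x) hg1
      calc C⁻¹ * |g x| ≤ C⁻¹ * C := mul_le_mul_of_nonneg_left hgx (by positivity)
        _ = 1 := inv_mul_cancel₀ (ne_of_gt hC)
    · intro x hx
      rw [ContinuousMap.smul_apply, hg2 x hx, smul_zero]
    · obtain ⟨m, hm⟩ := hg3
      exact ⟨m, fun x hx => by rw [ContinuousMap.smul_apply, hm x hx, smul_zero]⟩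
  have heq : T (C⁻¹ • g) s = C⁻¹ * T g s := by
    rw [map_smul, ContinuousMap.smul_apply, smul_eq_mul]
  rw [heq] at hbase
  calc T g s = C * (C⁻¹ * T g s) := by field_simp
    _ ≤ C * Var T s A := mul_le_mul_of_nonneg_left hbase (le_of_lt hC)

lemma Var_mono {s : KS} {A B : Set KS} (h : A ⊆ B) : Var T s A ≤ Var T s B := by
  apply csSup_le ⟨0, zero_mem_VarSet T s A⟩
  rintro r ⟨g, hg1, hg2, hg3, rfl⟩
  exact le_Var T hg1 (fun x hx => hg2 x (fun hxA => hx (h hxA))) hg3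

/-! ### Annuli and tails -/

def ann (s : KS) (ℓ : ℕ) : Set KS := cell s ℓ \ cell s (ℓ + 1)

lemma ann_disjoint {s : KS} {ℓ ℓ' : ℕ} (h : ℓ ≠ ℓ') {x : KS}
    (h1 : x ∈ ann s ℓ) (h2 : x ∈ ann s ℓ') : False := by
  rcases lt_or_gt_of_ne h with hlt | hlt
  · exact h1.2 (cell_antitone (Nat.succ_le_of_lt hlt) h2.1)
  · exact h2.2 (cell_antitone (Nat.succ_le_of_lt hlt) h1.1)

lemma sum_Var_ann_le (s : KS) (n : ℕ) :
    ∑ ℓ ∈ Finset.range n, Var T s (ann s ℓ) ≤ ‖T‖ := by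
  rcases Nat.eq_zero_or_pos n with rfl | hn
  · simp only [Finset.range_zero, Finset.sum_empty]
    exact norm_nonneg T
  apply le_of_forall_pos_le_add
  intro ε hε
  have hε' : 0 < ε / n := by positivity
  have hw : ∀ ℓ : ℕ, ∃ g : XS, ‖g‖ ≤ 1 ∧ (∀ x, x ∉ ann s ℓ → g x = 0) ∧
      (∃ m, ∀ x ∈ cell s m, g x = 0) ∧ Var T s (ann s ℓ) - ε / n ≤ T g s := by
    intro ℓ
    rcases lt_or_ge (Var T s (ann s ℓ) - ε / n) 0 with h | h
    · exact ⟨0, by simp, by simp, ⟨0, by simp⟩, by simp; linarith⟩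
    · obtain ⟨r, hrmem, hrlt⟩ := exists_lt_of_lt_csSup ⟨0, zero_mem_VarSet T s _⟩
        (show Var T s (ann s ℓ) - ε / n < Var T s (ann s ℓ) by linarith)
      obtain ⟨g, h1, h2, h3, rfl⟩ := hrmem
      exact ⟨g, h1, h2, h3, le_of_lt hrlt⟩
  choose g hg1 hg2 hg3 hg4 using hw
  set G : XS := ∑ ℓ ∈ Finset.range n, g ℓ with hG
  have hGnorm : ‖G‖ ≤ 1 := by
    rw [ContinuousMap.norm_le _ zero_le_one]
    intro x
    rw [hG, ContinuousMap.sum_apply]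
    by_cases hx : ∃ ℓ ∈ Finset.range n, x ∈ ann s ℓ
    · obtain ⟨ℓ₀, hℓ₀, hmem⟩ := hx
      have heq : ∑ ℓ ∈ Finset.range n, (g ℓ) x = (g ℓ₀) x :=
        Finset.sum_eq_single ℓ₀
          (fun b _ hbne => hg2 b x fun hmem' => (ann_disjoint hbne hmem' hmem).elim)
          (fun hc => absurd hℓ₀ hc)
      rw [heq]
      exact le_trans ((g ℓ₀).norm_coe_le_norm x) (hg1 ℓ₀)
    · push_neg at hx
      have heq : ∑ ℓ ∈ Finset.range n, (g ℓ) x = 0 :=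
        Finset.sum_eq_zero fun ℓ hℓ => hg2 ℓ x (hx ℓ hℓ)
      simp [heq]
  have hTG : T G s ≤ ‖T‖ := by
    refine le_trans (le_abs_self _) (le_trans ((T G).norm_coe_le_norm s) ?_)
    have := T.le_opNorm G
    nlinarith [norm_nonneg T]
  have hTGsum : T G s = ∑ ℓ ∈ Finset.range n, T (g ℓ) s := by
    rw [hG, map_sum, ContinuousMap.sum_apply]
  calc ∑ ℓ ∈ Finset.range n, Var T s (ann s ℓ)
      ≤ ∑ ℓ ∈ Finset.range n, (T (g ℓ) s + ε / n) :=
        Finset.sum_le_sum fun ℓ _ => by linarith [hg4 ℓ]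
    _ = T G s + n * (ε / n) := by
        rw [Finset.sum_add_distrib, hTGsum, Finset.sum_const, Finset.card_range, nsmul_eq_mul]
    _ ≤ ‖T‖ + ε := by
        have : (n : ℝ) * (ε / n) = ε := by
          field_simp
        rw [this]
        linarith

lemma summable_Var_ann (s : KS) : Summable (fun ℓ => Var T s (ann s ℓ)) :=
  summable_of_sum_range_le (fun ℓ => Var_nonneg T s (ann s ℓ)) (sum_Var_ann_le T s)

def tailV (s : KS) (k : ℕ) : ℝ := ∑' ℓ, Var T s (ann s (ℓ + k))

lemma tailV_nonneg (s : KS) (k : ℕ) : 0 ≤ tailV T s k := by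
  apply tsum_nonneg
  intro ℓ; exact Var_nonneg T s _

set_option maxHeartbeats 1000000 in
lemma tailV_anti (s : KS) {k m : ℕ} (h : k ≤ m) : tailV T s m ≤ tailV T s k := by
  have hsum : Summable fun ℓ => Var T s (ann s (ℓ + k)) :=
    (summable_nat_add_iff k).mpr (summable_Var_ann T s)
  have hkey := Summable.sum_add_tsum_nat_add (f := fun ℓ => Var T s (ann s (ℓ + k))) (m - k) hsum
  have hre : ∀ ℓ : ℕ, ℓ + (m - k) + k = ℓ + m := by
    intro ℓ; omega
  unfold tailV
  have : (∑' ℓ, Var T s (ann s (ℓ + m)))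
      = ∑' ℓ, Var T s (ann s (ℓ + (m - k) + k)) := by
    apply tsum_congr; intro ℓ; rw [hre ℓ]
  rw [this, ← hkey]
  have hpos : 0 ≤ ∑ i ∈ Finset.range (m - k), Var T s (ann s (i + k)) :=
    Finset.sum_nonneg fun i _ => Var_nonneg T s _
  linarith

lemma tendsto_tailV (s : KS) : Tendsto (tailV T s) atTop (𝓝 0) := by
  unfold tailV
  exact tendsto_sum_nat_add (fun ℓ => Var T s (ann s ℓ))

lemma sum_Ico_tele (f : ℕ → ℝ) {k m : ℕ} (h : k ≤ m) :
    ∑ ℓ ∈ Finset.Ico k m, (f ℓ - f (ℓ + 1)) = f k - f m := by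
  induction m, h using Nat.le_induction with
  | base => simp
  | succ m hkm ih => rw [Finset.sum_Ico_succ_top hkm, ih]; ring

set_option maxHeartbeats 1600000 in
lemma Var_cell_le_tail (s : KS) (k : ℕ) : Var T s (cell s k) ≤ tailV T s k := by
  apply csSup_le ⟨0, zero_mem_VarSet T s _⟩
  rintro r ⟨g, hg1, hg2, ⟨m₀, hg3⟩, rfl⟩
  set m := max m₀ k with hm
  have hg3' : ∀ x ∈ cell s m, g x = 0 := fun x hx =>
    hg3 x (cell_antitone (le_max_left _ _) hx)
  have hkm : k ≤ m := le_max_right _ _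
  have hdecomp : g = ∑ ℓ ∈ Finset.Ico k m, g * (chi s ℓ - chi s (ℓ + 1)) := by
    ext x
    rw [ContinuousMap.sum_apply]
    have hterm : ∀ ℓ, (g * (chi s ℓ - chi s (ℓ + 1))) x
        = g x * (chi s ℓ x - chi s (ℓ + 1) x) := fun ℓ => rfl
    simp_rw [hterm]
    rw [← Finset.mul_sum, sum_Ico_tele (fun ℓ => chi s ℓ x) hkm]
    by_cases hx : x ∈ cell s k
    · by_cases hxm : x ∈ cell s m
      · rw [hg3' x hxm]; ring
      · rw [chi_apply_of_mem hx, chi_apply_of_not_mem hxm]; ring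
    · rw [hg2 x hx, chi_apply_of_not_mem hx,
        chi_apply_of_not_mem (fun hc => hx (cell_antitone hkm hc))]
      ring
  have hTg : T g s = ∑ ℓ ∈ Finset.Ico k m, T (g * (chi s ℓ - chi s (ℓ + 1))) s := by
    conv_lhs => rw [hdecomp]
    rw [map_sum, ContinuousMap.sum_apply]
  rw [hTg]
  have hbound : ∀ ℓ ∈ Finset.Ico k m, T (g * (chi s ℓ - chi s (ℓ + 1))) s
      ≤ Var T s (ann s ℓ) := by
    intro ℓ _
    apply le_Var
    · rw [ContinuousMap.norm_le _ zero_le_one]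
      intro x
      rw [ContinuousMap.mul_apply, ContinuousMap.sub_apply]
      have hgx : |g x| ≤ 1 := le_trans (g.norm_coe_le_norm x) hg1
      have hχ : |chi s ℓ x - chi s (ℓ + 1) x| ≤ 1 := by
        by_cases h1 : x ∈ cell s (ℓ + 1)
        · rw [chi_apply_of_mem (cell_antitone (Nat.le_succ ℓ) h1), chi_apply_of_mem h1]
          simp
        · rw [chi_apply_of_not_mem h1]
          by_cases h2 : x ∈ cell s ℓ
          · rw [chi_apply_of_mem h2]; simp
          · rw [chi_apply_of_not_mem h2]; simp
      calc ‖g x * (chi s ℓ x - chi s (ℓ + 1) x)‖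
          = |g x| * |chi s ℓ x - chi s (ℓ + 1) x| := abs_mul _ _
        _ ≤ 1 * 1 := mul_le_mul hgx hχ (abs_nonneg _) zero_le_one
        _ = 1 := by ring
    · intro x hx
      rw [ContinuousMap.mul_apply, ContinuousMap.sub_apply]
      by_cases h1 : x ∈ cell s (ℓ + 1)
      · rw [chi_apply_of_mem (cell_antitone (Nat.le_succ ℓ) h1), chi_apply_of_mem h1]
        ring
      · by_cases h2 : x ∈ cell s ℓ
        · exact absurd ⟨h2, h1⟩ hx
        · rw [chi_apply_of_not_mem h2, chi_apply_of_not_mem h1]; ring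
    · refine ⟨ℓ + 1, fun x hx => ?_⟩
      rw [ContinuousMap.mul_apply, ContinuousMap.sub_apply,
        chi_apply_of_mem (cell_antitone (Nat.le_succ ℓ) hx), chi_apply_of_mem hx]
      ring
  calc ∑ ℓ ∈ Finset.Ico k m, T (g * (chi s ℓ - chi s (ℓ + 1))) s
      ≤ ∑ ℓ ∈ Finset.Ico k m, Var T s (ann s ℓ) := Finset.sum_le_sum hbound
    _ = ∑ i ∈ Finset.range (m - k), Var T s (ann s (k + i)) :=
        Finset.sum_Ico_eq_sum_range _ _ _
    _ = ∑ i ∈ Finset.range (m - k), Var T s (ann s (i + k)) := by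
        apply Finset.sum_congr rfl; intro i _; rw [Nat.add_comm k i]
    _ ≤ tailV T s k := Summable.sum_le_tsum _ (fun i _ => Var_nonneg T s _)
        ((summable_nat_add_iff k).mpr (summable_Var_ann T s))

/-! ### Diagonal coefficient -/

def Ak (s : KS) (k : ℕ) : ℝ := T (chi s k) s

lemma abs_Ak_sub_Ak (s : KS) {k m : ℕ} (h : k ≤ m) :
    |Ak T s k - Ak T s m| ≤ tailV T s k := by
  set g : XS := chi s k - chi s m with hg
  have hval : ∀ x, g x = chi s k x - chi s m x := fun x => rfl
  have hnorm : ‖g‖ ≤ 1 := by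
    rw [ContinuousMap.norm_le _ zero_le_one]
    intro x
    rw [hval]
    by_cases h1 : x ∈ cell s m
    · rw [chi_apply_of_mem (cell_antitone h h1), chi_apply_of_mem h1]; simp
    · rw [chi_apply_of_not_mem h1]
      by_cases h2 : x ∈ cell s k
      · rw [chi_apply_of_mem h2]; simp
      · rw [chi_apply_of_not_mem h2]; simp
  have hoff : ∀ x, x ∉ cell s k → g x = 0 := by
    intro x hx
    rw [hval, chi_apply_of_not_mem hx, chi_apply_of_not_mem (fun hc => hx (cell_antitone h hc))]
    ring
  have hnear : ∃ m', ∀ x ∈ cell s m', g x = 0 := by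
    refine ⟨m, fun x hx => ?_⟩
    rw [hval, chi_apply_of_mem (cell_antitone h hx), chi_apply_of_mem hx]; ring
  have heq : Ak T s k - Ak T s m = T g s := by
    rw [hg, map_sub, ContinuousMap.sub_apply]; rfl
  have h1 : T g s ≤ Var T s (cell s k) := le_Var T hnorm hoff hnear
  have h2 : T (-g) s ≤ Var T s (cell s k) := by
    apply le_Var T (by rwa [norm_neg]) (fun x hx => by rw [ContinuousMap.neg_apply, hoff x hx]; ring)
    obtain ⟨m', hm'⟩ := hnear
    exact ⟨m', fun x hx => by rw [ContinuousMap.neg_apply, hm' x hx]; ring⟩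
  have h2' : -(T g s) ≤ Var T s (cell s k) := by
    rw [← ContinuousMap.neg_apply, ← map_neg]
    exact h2
  rw [heq]
  exact le_trans (abs_le.mpr ⟨by linarith, h1⟩) (Var_cell_le_tail T s k)

lemma cauchy_Ak (s : KS) : CauchySeq (Ak T s) := by
  rw [Metric.cauchySeq_iff']
  intro ε hε
  have hev : ∀ᶠ k in atTop, tailV T s k < ε :=
    (tendsto_tailV T s).eventually (Filter.Tendsto.eventually_lt_const hε tendsto_id)
  obtain ⟨N, hN⟩ := hev.exists_forall_of_atTop
  refine ⟨N, fun n hn => ?_⟩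
  have := abs_Ak_sub_Ak T s hn
  rw [Real.dist_eq, abs_sub_comm]
  exact lt_of_le_of_lt this (hN N le_rfl)

def diag (s : KS) : ℝ := (cauchySeq_tendsto_of_complete (cauchy_Ak T s)).choose

lemma tendsto_Ak (s : KS) : Tendsto (Ak T s) atTop (𝓝 (diag T s)) :=
  (cauchySeq_tendsto_of_complete (cauchy_Ak T s)).choose_spec

lemma abs_Ak_sub_diag (s : KS) (k : ℕ) : |Ak T s k - diag T s| ≤ tailV T s k := by
  have hten : Tendsto (fun m => |Ak T s k - Ak T s m|) atTop (𝓝 |Ak T s k - diag T s|) :=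
    ((tendsto_const_nhds.sub (tendsto_Ak T s)).abs)
  apply le_of_tendsto hten
  filter_upwards [eventually_ge_atTop k] with m hm
  exact abs_Ak_sub_Ak T s hm

/-! ### Consequences of dissipativity -/

lemma exists_cell_small (g : XS) (s : KS) (h : g s = 0) {ε : ℝ} (hε : 0 < ε) :
    ∃ m, ∀ x ∈ cell s m, |g x| ≤ ε := by
  have hU : IsOpen {x : KS | |g x| < ε} := by
    have : {x : KS | |g x| < ε} = (fun x => |g x|) ⁻¹' Set.Iio ε := rfl
    rw [this]
    exact (g.continuous.abs).isOpen_preimage _ isOpen_Iio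
  have hs : s ∈ {x : KS | |g x| < ε} := by simp [h, hε]
  obtain ⟨m, hm⟩ := exists_cell_subset hU hs
  exact ⟨m, fun x hx => le_of_lt (hm hx)⟩

variable {T}

section Dissip

variable (hdis : ∀ lam ∈ numericalRange ℝ T, lam ≤ 0)
include hdis

lemma eval_T_nonpos {f : XS} {s : KS} (h1 : ‖f‖ ≤ 1) (h2 : f s = 1) : T f s ≤ 0 := by
  have hn : ‖f‖ = 1 := by
    refine le_antisymm h1 ?_
    have := f.norm_coe_le_norm s
    rw [h2] at this; simpa using this
  exact hdis _ ⟨f, dirac s, hn, norm_dirac s, by simpa using h2, rfl⟩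

lemma DD {g : XS} {s : KS} (h1 : ‖g‖ ≤ 1) (h2 : g s = 0) : diag T s + T g s ≤ 0 := by
  have key : ∀ k : ℕ, ∀ ε : ℝ, 0 < ε →
      T g s ≤ -(Ak T s k) + tailV T s k + (‖T‖ + 1) * ε := by
    intro k ε hε
    obtain ⟨m', hm'⟩ := exists_cell_small g s h2 hε
    set m := max m' k with hmdef
    have hsmall : ∀ x ∈ cell s m, |g x| ≤ ε := fun x hx =>
      hm' x (cell_antitone (le_max_left _ _) hx)
    have hkm : k ≤ m := le_max_right _ _
    set f : XS := chi s k + g - g * chi s k with hf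
    have hfx : ∀ x, f x = chi s k x + g x - g x * chi s k x := fun x => rfl
    have hfnorm : ‖f‖ ≤ 1 := by
      rw [ContinuousMap.norm_le _ zero_le_one]
      intro x
      rw [hfx]
      by_cases hx : x ∈ cell s k
      · rw [chi_apply_of_mem hx]
        simp
      · rw [chi_apply_of_not_mem hx]
        have := le_trans (g.norm_coe_le_norm x) h1
        simp only [Real.norm_eq_abs] at this ⊢
        calc |0 + g x - g x * 0| = |g x| := by ring_nf
          _ ≤ 1 := this
    have hfs : f s = 1 := by
      rw [hfx, chi_apply_of_mem (self_mem_cell s k), h2]; ring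
    have hTf : T f s ≤ 0 := eval_T_nonpos hdis hfnorm hfs
    have hTfeq : T f s = Ak T s k + T g s - T (g * chi s k) s := by
      rw [hf, map_sub, map_add, ContinuousMap.sub_apply, ContinuousMap.add_apply]; rfl
    -- decompose g * chi s k
    have hdec : g * chi s k = g * (chi s k - chi s m) + g * chi s m := by
      ext x; simp [ContinuousMap.mul_apply, ContinuousMap.sub_apply, ContinuousMap.add_apply]; ring
    have hA : T (g * (chi s k - chi s m)) s ≤ tailV T s k := by
      refine le_trans (le_Var T ?_ ?_ ?_) (Var_cell_le_tail T s k)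
      · rw [ContinuousMap.norm_le _ zero_le_one]
        intro x
        rw [ContinuousMap.mul_apply, ContinuousMap.sub_apply]
        have hgx : |g x| ≤ 1 := le_trans (g.norm_coe_le_norm x) h1
        have hχ : |chi s k x - chi s m x| ≤ 1 := by
          by_cases hxm : x ∈ cell s m
          · rw [chi_apply_of_mem (cell_antitone hkm hxm), chi_apply_of_mem hxm]; simp
          · rw [chi_apply_of_not_mem hxm]
            by_cases hxk : x ∈ cell s k
            · rw [chi_apply_of_mem hxk]; simp
            · rw [chi_apply_of_not_mem hxk]; simp
        calc ‖g x * (chi s k x - chi s m x)‖ = |g x| * |chi s k x - chi s m x| := abs_mul _ _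
          _ ≤ 1 * 1 := mul_le_mul hgx hχ (abs_nonneg _) zero_le_one
          _ = 1 := by ring
      · intro x hx
        rw [ContinuousMap.mul_apply, ContinuousMap.sub_apply, chi_apply_of_not_mem hx,
          chi_apply_of_not_mem (fun hc => hx (cell_antitone hkm hc))]
        ring
      · refine ⟨m, fun x hx => ?_⟩
        rw [ContinuousMap.mul_apply, ContinuousMap.sub_apply,
          chi_apply_of_mem (cell_antitone hkm hx), chi_apply_of_mem hx]
        ring
    have hB : |T (g * chi s m) s| ≤ ‖T‖ * ε := by
      have hnormB : ‖g * chi s m‖ ≤ ε := by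
        rw [ContinuousMap.norm_le _ (le_of_lt hε)]
        intro x
        rw [ContinuousMap.mul_apply]
        by_cases hx : x ∈ cell s m
        · rw [chi_apply_of_mem hx, mul_one]
          exact hsmall x hx
        · rw [chi_apply_of_not_mem hx, mul_zero]
          simp [le_of_lt hε]
      calc |T (g * chi s m) s| ≤ ‖T (g * chi s m)‖ := (T _).norm_coe_le_norm s
        _ ≤ ‖T‖ * ‖g * chi s m‖ := T.le_opNorm _
        _ ≤ ‖T‖ * ε := by nlinarith [norm_nonneg T]
    have hsplit : T (g * chi s k) s = T (g * (chi s k - chi s m)) s + T (g * chi s m) s := by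
      rw [hdec, map_add, ContinuousMap.add_apply]
    have : T (g * chi s k) s ≤ tailV T s k + ‖T‖ * ε := by
      rw [hsplit]
      have := abs_le.mp hB
      linarith
    have hTnn : (0:ℝ) ≤ ‖T‖ := norm_nonneg T
    nlinarith [hTf, hTfeq]
  apply le_of_forall_pos_le_add
  intro δ hδ
  have h3 : (0:ℝ) < δ / 3 := by linarith
  have hev : ∀ᶠ k in atTop, tailV T s k < δ / 3 :=
    (tendsto_tailV T s).eventually (Filter.Tendsto.eventually_lt_const h3 tendsto_id)
  obtain ⟨k, hk⟩ := hev.exists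
  have hεpos : (0:ℝ) < (δ / 3) / (‖T‖ + 1) := by
    have : (0:ℝ) < ‖T‖ + 1 := by nlinarith [norm_nonneg T]
    positivity
  have hkey := key k _ hεpos
  have hdA : |Ak T s k - diag T s| ≤ tailV T s k := abs_Ak_sub_diag T s k
  have habs := abs_le.mp hdA
  have hTpos : (0:ℝ) < ‖T‖ + 1 := by nlinarith [norm_nonneg T]
  have hmul : (‖T‖ + 1) * ((δ / 3) / (‖T‖ + 1)) = δ / 3 := by
    field_simp
  rw [hmul] at hkey
  linarith

lemma diag_nonpos (s : KS) : diag T s ≤ 0 := by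
  have := DD hdis (g := 0) (s := s) (by simp) (by simp)
  simpa using this

lemma T_g_eq_zero_of_diag_zero (hz : ∀ s, diag T s = 0) {g : XS} {s : KS} (h2 : g s = 0) :
    T g s = 0 := by
  have haux : ∀ h : XS, ‖h‖ ≤ 1 → h s = 0 → T h s = 0 := by
    intro h hh1 hh2
    have h1 := DD hdis hh1 hh2
    have h2' := DD hdis (g := -h) (by rwa [norm_neg]) (by rw [ContinuousMap.neg_apply, hh2]; ring)
    rw [hz s] at h1 h2'
    have : T (-h) s = -(T h s) := by rw [map_neg, ContinuousMap.neg_apply]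
    rw [this] at h2'
    linarith
  by_cases hg0 : g = 0
  · simp [hg0]
  · have hgn : (0:ℝ) < ‖g‖ := by
      rw [norm_pos_iff]
      exact hg0
    set h : XS := ‖g‖⁻¹ • g with hh
    have h1 : ‖h‖ ≤ 1 := by
      rw [ContinuousMap.norm_le _ zero_le_one]
      intro x
      rw [hh, ContinuousMap.smul_apply, smul_eq_mul, Real.norm_eq_abs, abs_mul, abs_inv, abs_norm]
      have hgx := g.norm_coe_le_norm x
      rw [Real.norm_eq_abs] at hgx
      calc ‖g‖⁻¹ * |g x| ≤ ‖g‖⁻¹ * ‖g‖ :=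
            mul_le_mul_of_nonneg_left hgx (by positivity)
        _ = 1 := inv_mul_cancel₀ (ne_of_gt hgn)
    have h2' : h s = 0 := by
      rw [hh, ContinuousMap.smul_apply, h2]; simp
    have := haux h h1 h2'
    rw [hh, map_smul, ContinuousMap.smul_apply, smul_eq_mul] at this
    rcases mul_eq_zero.mp this with hc | hc
    · exact absurd hc (inv_ne_zero (ne_of_gt hgn))
    · exact hc

lemma exists_diag_neg (hT : T ≠ 0) : ∃ t₀, diag T t₀ < 0 := by
  by_contra hc
  push_neg at hc
  have hz : ∀ s, diag T s = 0 := fun s => le_antisymm (diag_nonpos hdis s) (hc s)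
  apply hT
  have hT1 : ∀ s : KS, T 1 s = 0 := by
    intro s
    have hk : ∀ k : ℕ, T 1 s = Ak T s k := by
      intro k
      have hdecomp : (1 : XS) = chi s k + (1 - chi s k) := by ring
      have h0 : T (1 - chi s k) s = 0 := by
        apply T_g_eq_zero_of_diag_zero hdis hz
        rw [ContinuousMap.sub_apply, ContinuousMap.one_apply,
          chi_apply_of_mem (self_mem_cell s k)]
        ring
      conv_lhs => rw [hdecomp]
      rw [map_add, ContinuousMap.add_apply, h0]
      simp [Ak]
    have hlim : Tendsto (Ak T s) atTop (𝓝 (diag T s)) := tendsto_Ak T s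
    have hconst : Tendsto (Ak T s) atTop (𝓝 (T 1 s)) := by
      have : Ak T s = fun _ => T 1 s := by
        funext k; exact (hk k).symm
      rw [this]
      exact tendsto_const_nhds
    have := tendsto_nhds_unique hconst hlim
    rw [this, hz s]
  ext f x
  have hdecomp : f = f x • (1 : XS) + (f - f x • 1) := by ring
  have h0 : T (f - f x • 1) x = 0 := by
    apply T_g_eq_zero_of_diag_zero hdis hz
    rw [ContinuousMap.sub_apply, ContinuousMap.smul_apply, ContinuousMap.one_apply]
    simp
  conv_lhs => rw [hdecomp]
  rw [map_add, map_smul, ContinuousMap.add_apply, ContinuousMap.smul_apply, h0, hT1 x]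
  simp

lemma exists_neg_cell (hT : T ≠ 0) :
    ∃ (β : ℝ) (t₁ : KS) (k₁ : ℕ), 0 < β ∧ ∀ t ∈ cell t₁ k₁, diag T t ≤ -β := by
  obtain ⟨t₀, ht₀⟩ := exists_diag_neg hdis hT
  set α : ℝ := -(diag T t₀) with hα
  have hαpos : 0 < α := by rw [hα]; linarith
  -- choose k₀ with tailV < α/4
  have hev : ∀ᶠ k in atTop, tailV T t₀ k < α / 4 :=
    (tendsto_tailV T t₀).eventually (Filter.Tendsto.eventually_lt_const (by linarith) tendsto_id)
  obtain ⟨k₀, hk₀⟩ := hev.exists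
  have hA : Ak T t₀ k₀ ≤ -(3 * α / 4) := by
    have := abs_le.mp (abs_Ak_sub_diag T t₀ k₀)
    have hd : diag T t₀ = -α := by rw [hα]; ring
    linarith [this.2]
  set f₀ : XS := chi t₀ k₀ with hf₀
  -- ∀ t ∈ cell t₀ k₀ : 2 * diag T t ≤ T f₀ t
  have hkey : ∀ t ∈ cell t₀ k₀, 2 * diag T t ≤ T f₀ t := by
    intro t ht
    have hle : ∀ m : ℕ, k₀ ≤ m → Ak T t m + diag T t ≤ T f₀ t := by
      intro m hm
      have hcell : cell t m ⊆ cell t₀ k₀ := by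
        rw [← cell_eq_of_mem ht]
        exact cell_antitone hm
      set g : XS := f₀ - chi t m with hg
      have hgval : ∀ x, g x = chi t₀ k₀ x - chi t m x := fun x => rfl
      have hgnorm : ‖g‖ ≤ 1 := by
        rw [ContinuousMap.norm_le _ zero_le_one]
        intro x
        rw [hgval]
        by_cases h1 : x ∈ cell t m
        · rw [chi_apply_of_mem (hcell h1), chi_apply_of_mem h1]; simp
        · rw [chi_apply_of_not_mem h1]
          by_cases h2 : x ∈ cell t₀ k₀
          · rw [chi_apply_of_mem h2]; simp
          · rw [chi_apply_of_not_mem h2]; simp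
      have hgt : g t = 0 := by
        rw [hgval, chi_apply_of_mem ht, chi_apply_of_mem (self_mem_cell t m)]; ring
      have hDD := DD hdis (g := -g) (by rwa [norm_neg])
        (by rw [ContinuousMap.neg_apply, hgt]; ring)
      have hneg : T (-g) t = -(T g t) := by rw [map_neg, ContinuousMap.neg_apply]
      rw [hneg] at hDD
      have hTg : T g t = T f₀ t - Ak T t m := by
        rw [hg, map_sub, ContinuousMap.sub_apply]; rfl
      rw [hTg] at hDD
      linarith
    have hlim : Tendsto (fun m => Ak T t m + diag T t) atTop (𝓝 (diag T t + diag T t)) :=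
      (tendsto_Ak T t).add tendsto_const_nhds
    have : diag T t + diag T t ≤ T f₀ t := by
      apply le_of_tendsto hlim
      filter_upwards [eventually_ge_atTop k₀] with m hm
      exact hle m hm
    linarith
  -- open set where T f₀ < -α/2
  set V : Set KS := {t | T f₀ t < -(α / 2)} with hV
  have hVopen : IsOpen V := by
    have : V = (fun t => T f₀ t) ⁻¹' Set.Iio (-(α / 2)) := rfl
    rw [this]
    exact ((T f₀).continuous).isOpen_preimage _ isOpen_Iio
  have ht₀V : t₀ ∈ V := by
    have : T f₀ t₀ = Ak T t₀ k₀ := rfl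
    simp only [hV, Set.mem_setOf_eq, this]
    linarith
  have hVopen' : IsOpen (V ∩ cell t₀ k₀) := hVopen.inter (isOpen_cell t₀ k₀)
  obtain ⟨k₁, hk₁⟩ := exists_cell_subset hVopen' ⟨ht₀V, self_mem_cell t₀ k₀⟩
  refine ⟨α / 4, t₀, k₁, by linarith, ?_⟩
  intro t ht
  have h1 := (hk₁ ht).1
  have h2 := hkey t (hk₁ ht).2
  simp only [hV, Set.mem_setOf_eq] at h1
  linarith

end Dissip

/-! ### The good cell : Claim C -/

lemma claimC (T : XS →L[ℝ] XS) {θ : ℝ} (hθ : 0 < θ) (t₁ : KS) (k₁ : ℕ) :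
    ∃ (t : KS) (L : ℕ), cell t L ⊆ cell t₁ k₁ ∧ ∀ s ∈ cell t L, Var T s (cell t L) ≤ θ := by
  by_contra hcon
  push_neg at hcon
  have hstep : ∀ p : {p : KS × ℕ // cell p.1 p.2 ⊆ cell t₁ k₁},
      ∃ q : {p : KS × ℕ // cell p.1 p.2 ⊆ cell t₁ k₁},
        p.1.2 + 1 ≤ q.1.2 ∧ cell q.1.1 q.1.2 ⊆ cell p.1.1 p.1.2 ∧
        ∀ z ∈ cell q.1.1 q.1.2, θ < Var T z (cell p.1.1 p.1.2) := by
    rintro ⟨⟨t, L⟩, hsub⟩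
    obtain ⟨sb, hsb, hvar⟩ := hcon t L hsub
    obtain ⟨r, hrmem, hrθ⟩ := exists_lt_of_lt_csSup ⟨0, zero_mem_VarSet T sb _⟩ hvar
    obtain ⟨g, hg1, hg2, ⟨m, hg3⟩, rfl⟩ := hrmem
    have hUopen : IsOpen (cell sb m ∩ {x | θ < T g x}) := by
      apply (isOpen_cell sb m).inter
      have : {x : KS | θ < T g x} = (fun x => T g x) ⁻¹' Set.Ioi θ := rfl
      rw [this]
      exact ((T g).continuous).isOpen_preimage _ isOpen_Ioi
    have hsbU : sb ∈ cell sb m ∩ {x | θ < T g x} := ⟨self_mem_cell sb m, hrθ⟩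
    obtain ⟨k₂, hk₂⟩ := exists_cell_subset hUopen hsbU
    have hsub1 : cell sb (max k₂ (L + 1)) ⊆ cell sb k₂ := cell_antitone (le_max_left _ _)
    have hsub2 : cell sb (max k₂ (L + 1)) ⊆ cell t L := by
      have h' : cell sb (max k₂ (L + 1)) ⊆ cell sb L := cell_antitone (by omega)
      rwa [cell_eq_of_mem hsb] at h'
    refine ⟨⟨(sb, max k₂ (L + 1)), hsub2.trans hsub⟩, le_max_right _ _, hsub2, ?_⟩
    intro z hz
    have hzU := hk₂ (hsub1 hz)
    have hle : T g z ≤ Var T z (cell t L) := by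
      apply le_Var T hg1 hg2
      refine ⟨m, fun x hx => ?_⟩
      apply hg3
      rwa [cell_eq_of_mem hzU.1] at hx
    exact lt_of_lt_of_le hzU.2 hle
  choose F hF1 hF2 hF3 using hstep
  set p₀ : {p : KS × ℕ // cell p.1 p.2 ⊆ cell t₁ k₁} := ⟨(t₁, k₁), subset_rfl⟩ with hp₀
  set seq : ℕ → {p : KS × ℕ // cell p.1 p.2 ⊆ cell t₁ k₁} := fun n => F^[n] p₀ with hseqdef
  have hsucc : ∀ n, seq (n + 1) = F (seq n) := fun n => Function.iterate_succ_apply' F n p₀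
  set tt : ℕ → KS := fun n => (seq n).1.1 with htt
  set LL : ℕ → ℕ := fun n => (seq n).1.2 with hLL
  have hLmono : ∀ n, LL n + 1 ≤ LL (n + 1) := by
    intro n
    have := hF1 (seq n)
    rw [← hsucc n] at this
    exact this
  have hLn : ∀ n, n ≤ LL n := by
    intro n
    induction n with
    | zero => exact Nat.zero_le _
    | succ n ih => exact le_trans (by omega) (hLmono n)
  have hnested : ∀ n, cell (tt (n + 1)) (LL (n + 1)) ⊆ cell (tt n) (LL n) := by
    intro n
    have := hF2 (seq n)
    rw [← hsucc n] at this
    exact this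
  have hchain : ∀ n m, n ≤ m → cell (tt m) (LL m) ⊆ cell (tt n) (LL n) := by
    intro n m h
    induction m, h using Nat.le_induction with
    | base => exact subset_rfl
    | succ m hnm ih => exact (hnested m).trans ih
  set z : KS := fun i => tt (i + 1) i with hzdef
  have hzmem : ∀ n, z ∈ cell (tt n) (LL n) := by
    intro n i hi
    show tt (i + 1) i = tt n i
    rcases le_or_gt n (i + 1) with hcase | hcase
    · exact hchain n (i + 1) hcase (self_mem_cell _ _) i hi
    · have hmem := hchain (i + 1) n (le_of_lt hcase) (self_mem_cell _ _)
      have hiL : i < LL (i + 1) := lt_of_lt_of_le (Nat.lt_succ_self i) (hLn (i + 1))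
      exact (hmem i hiL).symm
  obtain ⟨k₀, hk₀⟩ :=
    ((tendsto_tailV T z).eventually (Filter.Tendsto.eventually_lt_const hθ tendsto_id)).exists
  have hVz : θ < Var T z (cell (tt k₀) (LL k₀)) := by
    have h3 := hF3 (seq k₀)
    rw [← hsucc k₀] at h3
    exact h3 z (hzmem (k₀ + 1))
  have hcelleq : cell z (LL k₀) = cell (tt k₀) (LL k₀) := cell_eq_of_mem (hzmem k₀)
  rw [← hcelleq] at hVz
  have hVle : Var T z (cell z (LL k₀)) ≤ tailV T z k₀ :=
    le_trans (Var_cell_le_tail T z (LL k₀)) (tailV_anti T z (hLn k₀))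
  simp only [id_eq] at hk₀
  linarith

/-! ### The lower bound on the good cell -/

lemma norm_T_lower (T : XS →L[ℝ] XS) {β : ℝ} (hβ : 0 < β) (tD : KS) (LD : ℕ)
    (hdiag : ∀ s ∈ cell tD LD, diag T s ≤ -β)
    (hvar : ∀ s ∈ cell tD LD, Var T s (cell tD LD) ≤ β / 6) :
    ∀ f : XS, (∀ x, x ∉ cell tD LD → f x = 0) → (β / 2) * ‖f‖ ≤ ‖T f‖ := by
  have aux : ∀ f : XS, (∀ x, x ∉ cell tD LD → f x = 0) → ∀ ts : KS, ts ∈ cell tD LD →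
      f ts = ‖f‖ → 0 < ‖f‖ → T f ts ≤ -((β / 2) * ‖f‖) := by
    intro f hsupp ts hts hfts hpos
    set R : ℝ := ‖f‖ with hR
    apply le_of_forall_pos_le_add
    intro δ hδ
    have hTpos : (0:ℝ) < ‖T‖ + 1 := by nlinarith [norm_nonneg T]
    have hεpos : (0:ℝ) < δ / (‖T‖ + 1) := by positivity
    -- choose m
    have hev : ∀ᶠ m in atTop, tailV T ts m < β / 6 :=
      (tendsto_tailV T ts).eventually (Filter.Tendsto.eventually_lt_const (by linarith) tendsto_id)
    obtain ⟨m, hm1, hm2⟩ := (hev.and (eventually_ge_atTop LD)).exists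
    have hcellm : cell ts m ⊆ cell tD LD := by
      have h' : cell ts m ⊆ cell ts LD := cell_antitone hm2
      rwa [cell_eq_of_mem hts] at h'
    set h : XS := f - R • chi ts m with hhdef
    have hval : ∀ x, h x = f x - R * chi ts m x := fun x => rfl
    have hhts : h ts = 0 := by
      rw [hval, chi_apply_of_mem (self_mem_cell ts m), hfts]; ring
    have hhnorm : ‖h‖ ≤ 2 * R := by
      rw [ContinuousMap.norm_le _ (by positivity)]
      intro x
      rw [hval]
      have hfx : |f x| ≤ R := le_trans (f.norm_coe_le_norm x) le_rfl
      by_cases hx : x ∈ cell ts m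
      · rw [chi_apply_of_mem hx, mul_one, Real.norm_eq_abs]
        have habs : |f x - R| ≤ |f x| + |R| := abs_sub (f x) R
        have hRnn : (0:ℝ) ≤ R := norm_nonneg f
        rw [abs_of_nonneg hRnn] at habs
        linarith
      · rw [chi_apply_of_not_mem hx, mul_zero, sub_zero, Real.norm_eq_abs]
        linarith
    have hsupph : ∀ x, x ∉ cell tD LD → h x = 0 := by
      intro x hx
      rw [hval, hsupp x hx, chi_apply_of_not_mem (fun hc => hx (hcellm hc)), mul_zero]
      ring
    obtain ⟨j, hj⟩ := exists_cell_small h ts hhts hεpos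
    have hdec : h = h * (1 - chi ts j) + h * chi ts j := by
      ext x
      simp [ContinuousMap.mul_apply, ContinuousMap.add_apply, ContinuousMap.sub_apply]
      ring
    have hA : T (h * (1 - chi ts j)) ts ≤ 2 * R * (β / 6) := by
      have := le_Var_scaled T (s := ts) (A := cell tD LD) (C := 2 * R) (by positivity)
        (g := h * (1 - chi ts j)) ?_ ?_ ?_
      · refine le_trans this ?_
        exact mul_le_mul_of_nonneg_left (hvar ts hts) (by positivity)
      · rw [ContinuousMap.norm_le _ (by positivity)]
        intro x
        rw [ContinuousMap.mul_apply, ContinuousMap.sub_apply (1 : XS) (chi ts j) x,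
          ContinuousMap.one_apply, Real.norm_eq_abs, abs_mul]
        have hhx : |h x| ≤ 2 * R := le_trans (h.norm_coe_le_norm x) hhnorm
        have hfac : |1 - chi ts j x| ≤ 1 := by
          by_cases hx : x ∈ cell ts j
          · rw [chi_apply_of_mem hx]; simp
          · rw [chi_apply_of_not_mem hx]; simp
        calc |h x| * |1 - chi ts j x| ≤ (2 * R) * 1 :=
              mul_le_mul hhx hfac (abs_nonneg _) (by positivity)
          _ = 2 * R := by ring
      · intro x hx
        rw [ContinuousMap.mul_apply, hsupph x hx]; ring
      · refine ⟨j, fun x hx => ?_⟩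
        rw [ContinuousMap.mul_apply, ContinuousMap.sub_apply (1 : XS) (chi ts j) x,
          ContinuousMap.one_apply, chi_apply_of_mem hx]
        ring
    have hB : |T (h * chi ts j) ts| ≤ δ := by
      have hnormB : ‖h * chi ts j‖ ≤ δ / (‖T‖ + 1) := by
        rw [ContinuousMap.norm_le _ (le_of_lt hεpos)]
        intro x
        rw [ContinuousMap.mul_apply, Real.norm_eq_abs, abs_mul]
        by_cases hx : x ∈ cell ts j
        · rw [chi_apply_of_mem hx]
          simpa using hj x hx
        · rw [chi_apply_of_not_mem hx]
          simp [le_of_lt hεpos]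
      calc |T (h * chi ts j) ts| ≤ ‖T (h * chi ts j)‖ := (T _).norm_coe_le_norm ts
        _ ≤ ‖T‖ * ‖h * chi ts j‖ := T.le_opNorm _
        _ ≤ ‖T‖ * (δ / (‖T‖ + 1)) := mul_le_mul_of_nonneg_left hnormB (norm_nonneg T)
        _ ≤ δ := by
            rw [div_eq_mul_inv]
            rw [show ‖T‖ * (δ * (‖T‖ + 1)⁻¹) = δ * (‖T‖ * (‖T‖ + 1)⁻¹) by ring]
            have hfrac : ‖T‖ * (‖T‖ + 1)⁻¹ ≤ 1 := by
              rw [← div_eq_mul_inv, div_le_one hTpos]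
              linarith
            nlinarith
    have hTh : T h ts ≤ 2 * R * (β / 6) + δ := by
      have hsplit : T h ts = T (h * (1 - chi ts j)) ts + T (h * chi ts j) ts := by
        conv_lhs => rw [hdec]
        rw [map_add, ContinuousMap.add_apply]
      rw [hsplit]
      have := abs_le.mp hB
      linarith
    have hTf : T f ts = R * Ak T ts m + T h ts := by
      have hfeq : f = R • chi ts m + h := by rw [hhdef]; ring
      conv_lhs => rw [hfeq]
      rw [map_add, map_smul, ContinuousMap.add_apply, ContinuousMap.smul_apply, smul_eq_mul]
      rfl
    have hAk : Ak T ts m ≤ -β + β / 6 := by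
      have h1 := (abs_le.mp (abs_Ak_sub_diag T ts m)).2
      have h2 := hdiag ts hts
      linarith
    rw [hTf]
    have hRpos : 0 < R := hpos
    calc R * Ak T ts m + T h ts ≤ R * (-β + β / 6) + (2 * R * (β / 6) + δ) := by
          have := mul_le_mul_of_nonneg_left hAk (le_of_lt hRpos)
          linarith
      _ = -(β / 2 * R) + δ := by ring
      _ = -(β / 2 * ‖f‖) + δ := by rw [hR]
  intro f hsupp
  rcases eq_or_lt_of_le (norm_nonneg f) with h0 | hpos
  · rw [← h0]
    simp
  obtain ⟨ts, hts⟩ : ∃ ts : KS, ∀ y, |f y| ≤ |f ts| := by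
    obtain ⟨ts, -, hts⟩ := isCompact_univ.exists_isMaxOn (Set.univ_nonempty)
      ((f.continuous.abs).continuousOn (s := Set.univ))
    exact ⟨ts, fun y => hts (Set.mem_univ y)⟩
  have habs_ts : |f ts| = ‖f‖ := by
    refine le_antisymm ?_ ?_
    · rw [← Real.norm_eq_abs]
      exact f.norm_coe_le_norm ts
    · refine (ContinuousMap.norm_le _ (abs_nonneg _)).mpr fun y => ?_
      rw [Real.norm_eq_abs]
      exact hts y
  have htsD : ts ∈ cell tD LD := by
    by_contra hc
    rw [hsupp ts hc] at habs_ts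
    simp at habs_ts
    rw [← habs_ts] at hpos
    exact lt_irrefl _ hpos
  have hfinal : (β / 2) * ‖f‖ ≤ |T f ts| := by
    rcases abs_choice (f ts) with hsign | hsign
    · -- |f ts| = f ts, so f ts = ‖f‖
      have hfeq : f ts = ‖f‖ := by rw [← hsign, habs_ts]
      have haux := aux f hsupp ts htsD hfeq hpos
      have : -(T f ts) ≤ |T f ts| := neg_le_abs _
      nlinarith [neg_le_abs (T f ts)]
    · -- |f ts| = -(f ts), so f ts = -‖f‖
      have hfeq : (-f) ts = ‖-f‖ := by
        rw [ContinuousMap.neg_apply, norm_neg]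
        rw [← habs_ts, hsign]
      have hsupp' : ∀ x, x ∉ cell tD LD → (-f) x = 0 := fun x hx => by
        rw [ContinuousMap.neg_apply, hsupp x hx]; ring
      have hpos' : 0 < ‖-f‖ := by rwa [norm_neg]
      have haux := aux (-f) hsupp' ts htsD hfeq hpos'
      rw [norm_neg] at haux
      have hTneg : T (-f) ts = -(T f ts) := by rw [map_neg, ContinuousMap.neg_apply]
      rw [hTneg] at haux
      nlinarith [le_abs_self (T f ts)]
  refine le_trans hfinal ?_
  rw [← Real.norm_eq_abs]
  exact (T f).norm_coe_le_norm ts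

end Operator

/-! ### The Rademacher embedding of ℓ₁ -/

abbrev L1S : Type := lp (fun _ : ℕ => ℝ) 1

lemma L1S_summable (u : L1S) : Summable (fun n => ‖(u : ∀ _ : ℕ, ℝ) n‖) := by
  have h := lp.memℓp u
  have := h.summable (p := 1) (by norm_num)
  simpa using this

lemma L1S_norm (u : L1S) : ‖u‖ = ∑' n, ‖(u : ∀ _ : ℕ, ℝ) n‖ := by
  have := lp.norm_eq_tsum_rpow (p := 1) (by norm_num) u
  simpa using this

section Rade

variable (tD : KS) (L : ℕ)

def rad (n : ℕ) : XS :=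
  chi tD L * ⟨fun x => if x (L + n) = false then (1 : ℝ) else -1,
    (continuous_of_discreteTopology
      (f := fun b : Bool => if b = false then (1 : ℝ) else -1)).comp (continuous_apply (L + n))⟩

lemma rad_apply_of_mem {x : KS} (hx : x ∈ cell tD L) (n : ℕ) :
    rad tD L n x = if x (L + n) = false then (1 : ℝ) else -1 := by
  show chi tD L x * _ = _
  rw [chi_apply_of_mem hx, one_mul]
  rfl

lemma rad_apply_of_not_mem {x : KS} (hx : x ∉ cell tD L) (n : ℕ) : rad tD L n x = 0 := by
  show chi tD L x * _ = 0
  rw [chi_apply_of_not_mem hx, zero_mul]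

lemma rad_norm_le (n : ℕ) : ‖rad tD L n‖ ≤ 1 := by
  rw [ContinuousMap.norm_le _ zero_le_one]
  intro x
  by_cases hx : x ∈ cell tD L
  · rw [rad_apply_of_mem tD L hx]
    split <;> simp
  · rw [rad_apply_of_not_mem tD L hx]
    simp

lemma norm_smul_rad_le (u : L1S) (n : ℕ) :
    ‖(u : ∀ _ : ℕ, ℝ) n • rad tD L n‖ ≤ ‖(u : ∀ _ : ℕ, ℝ) n‖ := by
  rw [ContinuousMap.norm_le _ (norm_nonneg _)]
  intro x
  rw [ContinuousMap.smul_apply, smul_eq_mul, Real.norm_eq_abs, abs_mul]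
  have h1 : |rad tD L n x| ≤ 1 :=
    le_trans ((rad tD L n).norm_coe_le_norm x) (rad_norm_le tD L n)
  calc |(u : ∀ _ : ℕ, ℝ) n| * |rad tD L n x| ≤ |(u : ∀ _ : ℕ, ℝ) n| * 1 :=
        mul_le_mul_of_nonneg_left h1 (abs_nonneg _)
    _ = ‖(u : ∀ _ : ℕ, ℝ) n‖ := by rw [mul_one, Real.norm_eq_abs]

lemma summable_J (u : L1S) : Summable (fun n => (u : ∀ _ : ℕ, ℝ) n • rad tD L n) :=
  Summable.of_norm_bounded (g := fun n => ‖(u : ∀ _ : ℕ, ℝ) n‖) (L1S_summable u)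
    (fun n => norm_smul_rad_le tD L u n)

lemma norm_Jsum_le (u : L1S) : ‖∑' n, (u : ∀ _ : ℕ, ℝ) n • rad tD L n‖ ≤ ‖u‖ := by
  have hsum : Summable (fun n => ‖(u : ∀ _ : ℕ, ℝ) n • rad tD L n‖) :=
    Summable.of_nonneg_of_le (fun n => norm_nonneg _) (fun n => norm_smul_rad_le tD L u n)
      (L1S_summable u)
  refine le_trans (norm_tsum_le_tsum_norm hsum) ?_
  rw [L1S_norm u]
  exact Summable.tsum_le_tsum (fun n => norm_smul_rad_le tD L u n) hsum (L1S_summable u)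

def Jc : L1S →L[ℝ] XS :=
  LinearMap.mkContinuous
    { toFun := fun u => ∑' n, (u : ∀ _ : ℕ, ℝ) n • rad tD L n
      map_add' := by
        intro u v
        rw [← Summable.tsum_add (summable_J tD L u) (summable_J tD L v)]
        apply tsum_congr
        intro n
        rw [lp.coeFn_add, Pi.add_apply, add_smul]
      map_smul' := by
        intro c u
        show (∑' n, ((c • u : L1S) : ∀ _ : ℕ, ℝ) n • rad tD L n)
            = (RingHom.id ℝ) c • ∑' n, (u : ∀ _ : ℕ, ℝ) n • rad tD L n
        rw [RingHom.id_apply, ← tsum_const_smul'' c]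
        apply tsum_congr
        intro n
        rw [lp.coeFn_smul, Pi.smul_apply, smul_smul, smul_eq_mul] }
    1 (fun u => by simpa using norm_Jsum_le tD L u)

lemma Jc_apply (u : L1S) (x : KS) :
    Jc tD L u x = ∑' n, (u : ∀ _ : ℕ, ℝ) n * rad tD L n x := by
  show dirac x (∑' n, (u : ∀ _ : ℕ, ℝ) n • rad tD L n) = _
  rw [ContinuousLinearMap.map_tsum (dirac x) (summable_J tD L u)]
  apply tsum_congr
  intro n
  rw [dirac_apply, ContinuousMap.smul_apply, smul_eq_mul]

lemma Jc_supp (u : L1S) {x : KS} (hx : x ∉ cell tD L) : Jc tD L u x = 0 := by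
  rw [Jc_apply]
  have : ∀ n : ℕ, (u : ∀ _ : ℕ, ℝ) n * rad tD L n x = 0 := by
    intro n
    rw [rad_apply_of_not_mem tD L hx, mul_zero]
  rw [tsum_congr this, tsum_zero]

lemma Jc_norm_ge (u : L1S) : ‖u‖ ≤ ‖Jc tD L u‖ := by
  set xw : KS := fun i => if i < L then tD i
    else (if (u : ∀ _ : ℕ, ℝ) (i - L) < 0 then true else false) with hxw
  have hxwcell : xw ∈ cell tD L := by
    intro i hi
    show (if i < L then tD i else _) = tD i
    rw [if_pos hi]
  have hval : ∀ n, (u : ∀ _ : ℕ, ℝ) n * rad tD L n xw = ‖(u : ∀ _ : ℕ, ℝ) n‖ := by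
    intro n
    rw [rad_apply_of_mem tD L hxwcell]
    have hcoord : xw (L + n) = (if (u : ∀ _ : ℕ, ℝ) n < 0 then true else false) := by
      have h1 : ¬ (L + n < L) := by omega
      have h2 : L + n - L = n := by omega
      simp only [hxw]
      rw [if_neg h1, h2]
    rw [hcoord, Real.norm_eq_abs]
    by_cases hu : (u : ∀ _ : ℕ, ℝ) n < 0
    · rw [if_pos hu]
      simp only [Bool.true_eq_false, if_false, ite_false]
      rw [abs_of_neg hu]
      simp
    · rw [if_neg hu]
      simp only [ite_true]
      rw [abs_of_nonneg (not_lt.mp hu)]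
      simp
  have heval : Jc tD L u xw = ‖u‖ := by
    rw [Jc_apply, tsum_congr hval, ← L1S_norm u]
  calc ‖u‖ = |Jc tD L u xw| := by rw [heval, abs_of_nonneg (norm_nonneg u)]
    _ ≤ ‖Jc tD L u‖ := by
        rw [← Real.norm_eq_abs]
        exact (Jc tD L u).norm_coe_le_norm xw

end Rade

/-! ### Part 1 conclusion -/

lemma part1 : ∀ T : XS →L[ℝ] XS, T ≠ 0 → (∀ lam ∈ numericalRange ℝ T, lam ≤ 0) →
    ∃ (J : L1S →L[ℝ] XS) (c : ℝ), 0 < c ∧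
      ∀ u : L1S, c * ‖u‖ ≤ ‖J u‖ ∧ c * ‖u‖ ≤ ‖T (J u)‖ := by
  intro T hT hdis
  obtain ⟨β, t₁, k₁, hβ, hneg⟩ := exists_neg_cell hdis hT
  obtain ⟨tD, LD, hsub, hvar⟩ := claimC T (θ := β / 6) (by linarith) t₁ k₁
  have hdiag : ∀ s ∈ cell tD LD, diag T s ≤ -β := fun s hs => hneg s (hsub hs)
  have hlower := norm_T_lower T hβ tD LD hdiag hvar
  refine ⟨Jc tD LD, min 1 (β / 2), lt_min one_pos (by linarith), fun u => ?_⟩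
  have hJge : ‖u‖ ≤ ‖Jc tD LD u‖ := Jc_norm_ge tD LD u
  have hun : (0:ℝ) ≤ ‖u‖ := norm_nonneg u
  constructor
  · calc min 1 (β / 2) * ‖u‖ ≤ 1 * ‖u‖ :=
        mul_le_mul_of_nonneg_right (min_le_left _ _) hun
      _ = ‖u‖ := one_mul _
      _ ≤ ‖Jc tD LD u‖ := hJge
  · have hlow := hlower (Jc tD LD u) (fun x hx => Jc_supp tD LD u hx)
    calc min 1 (β / 2) * ‖u‖ ≤ (β / 2) * ‖u‖ :=
        mul_le_mul_of_nonneg_right (min_le_right _ _) hun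
      _ ≤ (β / 2) * ‖Jc tD LD u‖ := mul_le_mul_of_nonneg_left hJge (by linarith)
      _ ≤ ‖T (Jc tD LD u)‖ := hlow

/-! ### Part 2 : finite-rank dissipative operators on the dual -/

abbrev DS : Type := StrongDual ℝ XS

def tpt (n : ℕ) : KS := fun i => decide (i < n)

lemma tpt_not_mem_cell {m n k : ℕ} (hmn : m ≠ n) (hk : min m n < k) :
    tpt m ∉ cell (tpt n) k := by
  intro hc
  have h0 := hc (min m n) hk
  simp only [tpt, decide_eq_decide] at h0
  omega

def UF : Ultrafilter ℕ := Ultrafilter.of atTop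

lemma UF_le_atTop : (UF : Filter ℕ) ≤ atTop := Ultrafilter.of_le _

instance : ((UF : Filter ℕ)).NeBot := Ultrafilter.neBot _

lemma ulim_exists (s : ℕ → ℝ) (C : ℝ) (h : ∀ k, |s k| ≤ C) :
    ∃ x, Tendsto s (UF : Filter ℕ) (𝓝 x) ∧ |x| ≤ C := by
  have hmem : Set.Icc (-C) C ∈ Ultrafilter.map s UF := by
    rw [Ultrafilter.mem_map]
    apply Filter.univ_mem'
    intro k
    exact Set.mem_Icc.mpr (abs_le.mp (h k))
  obtain ⟨x, hx1, hx2⟩ := (isCompact_Icc (a := -C) (b := C)).ultrafilter_le_nhds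
    (Ultrafilter.map s UF) (le_principal_iff.mpr hmem)
  refine ⟨x, ?_, abs_le.mpr ⟨hx1.1, hx1.2⟩⟩
  rw [Tendsto, ← Ultrafilter.coe_map]
  exact hx2

def phiSeq (n : ℕ) (φ : DS) : ℕ → ℝ := fun k => φ (chi (tpt n) k)

lemma phiSeq_bdd (n : ℕ) (φ : DS) : ∀ k, |phiSeq n φ k| ≤ ‖φ‖ := by
  intro k
  calc |phiSeq n φ k| = ‖φ (chi (tpt n) k)‖ := (Real.norm_eq_abs _).symm
    _ ≤ ‖φ‖ * ‖chi (tpt n) k‖ := φ.le_opNorm _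
    _ ≤ ‖φ‖ := by
        have := chi_norm_le (tpt n) k
        nlinarith [norm_nonneg φ]

def Phifun (n : ℕ) (φ : DS) : ℝ :=
  (ulim_exists (phiSeq n φ) ‖φ‖ (phiSeq_bdd n φ)).choose

lemma Phifun_tendsto (n : ℕ) (φ : DS) :
    Tendsto (phiSeq n φ) (UF : Filter ℕ) (𝓝 (Phifun n φ)) :=
  (ulim_exists (phiSeq n φ) ‖φ‖ (phiSeq_bdd n φ)).choose_spec.1

lemma Phifun_abs_le (n : ℕ) (φ : DS) : |Phifun n φ| ≤ ‖φ‖ :=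
  (ulim_exists (phiSeq n φ) ‖φ‖ (phiSeq_bdd n φ)).choose_spec.2

lemma Phifun_add (n : ℕ) (φ ψ : DS) : Phifun n (φ + ψ) = Phifun n φ + Phifun n ψ := by
  have h1 : Tendsto (phiSeq n (φ + ψ)) (UF : Filter ℕ) (𝓝 (Phifun n φ + Phifun n ψ)) := by
    have : phiSeq n (φ + ψ) = fun k => phiSeq n φ k + phiSeq n ψ k := by
      funext k
      simp [phiSeq]
    rw [this]
    exact (Phifun_tendsto n φ).add (Phifun_tendsto n ψ)
  exact tendsto_nhds_unique (Phifun_tendsto n (φ + ψ)) h1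

lemma Phifun_smul (n : ℕ) (c : ℝ) (φ : DS) : Phifun n (c • φ) = c * Phifun n φ := by
  have h1 : Tendsto (phiSeq n (c • φ)) (UF : Filter ℕ) (𝓝 (c * Phifun n φ)) := by
    have : phiSeq n (c • φ) = fun k => c * phiSeq n φ k := by
      funext k
      simp [phiSeq]
    rw [this]
    exact (Phifun_tendsto n φ).const_mul c
  exact tendsto_nhds_unique (Phifun_tendsto n (c • φ)) h1

def Phi (n : ℕ) : DS →L[ℝ] ℝ :=
  LinearMap.mkContinuous
    (E := DS)
    { toFun := Phifun n
      map_add' := Phifun_add n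
      map_smul' := fun c φ => by rw [RingHom.id_apply, smul_eq_mul]; exact Phifun_smul n c φ }
    1 (fun φ => by rw [Real.norm_eq_abs, one_mul]; exact Phifun_abs_le n φ)

lemma Phi_apply (n : ℕ) (φ : DS) : Phi n φ = Phifun n φ := rfl

def Sop (n : ℕ) : DS →L[ℝ] DS := (Phi n).smulRight (-(dirac (tpt n)))

lemma Sop_apply (n : ℕ) (φ : DS) : Sop n φ = (Phifun n φ) • (-(dirac (tpt n))) :=
  ContinuousLinearMap.smulRight_apply

lemma Phifun_dirac_self (n : ℕ) : Phifun n (dirac (tpt n)) = 1 := by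
  have h1 : phiSeq n (dirac (tpt n)) = fun _ => (1 : ℝ) := by
    funext k
    show chi (tpt n) k (tpt n) = 1
    exact chi_apply_of_mem (self_mem_cell _ _)
  have h2 : Tendsto (phiSeq n (dirac (tpt n))) (UF : Filter ℕ) (𝓝 1) := by
    rw [h1]; exact tendsto_const_nhds
  exact tendsto_nhds_unique (Phifun_tendsto n _) h2

lemma Phifun_dirac_other {m n : ℕ} (h : m ≠ n) : Phifun n (dirac (tpt m)) = 0 := by
  have hev : (fun k => phiSeq n (dirac (tpt m)) k) =ᶠ[(UF : Filter ℕ)] (fun _ => (0:ℝ)) := by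
    apply Filter.Eventually.filter_mono UF_le_atTop
    filter_upwards [eventually_gt_atTop (min m n)] with k hk
    show chi (tpt n) k (tpt m) = 0
    exact chi_apply_of_not_mem (tpt_not_mem_cell h hk)
  have h2 : Tendsto (phiSeq n (dirac (tpt m))) (UF : Filter ℕ) (𝓝 0) := by
    apply Tendsto.congr' hev.symm
    exact tendsto_const_nhds
  exact tendsto_nhds_unique (Phifun_tendsto n _) h2

lemma dirac_tpt_ne_zero (n : ℕ) : dirac (tpt n) ≠ 0 := by
  intro hc
  have : dirac (tpt n) (1 : XS) = 1 := by simp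
  rw [hc] at this
  simp at this

/-- Claim A : the L-decomposition inequality at an atom. -/
lemma normA (n : ℕ) (φ : DS) :
    |Phifun n φ| + ‖φ - (Phifun n φ) • dirac (tpt n)‖ ≤ ‖φ‖ := by
  set a : ℝ := Phifun n φ with ha
  set t : KS := tpt n with htdef
  set ν : DS := φ - a • dirac t with hν
  apply le_of_forall_pos_le_add
  intro ε hε
  -- a norming element for ν
  obtain ⟨f, hf1, hf2⟩ : ∃ f : XS, ‖f‖ ≤ 1 ∧ ‖ν‖ - ε ≤ ν f := by
    rcases le_or_gt ‖ν‖ ε with hcase | hcase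
    · exact ⟨0, by simp, by simp; linarith⟩
    · obtain ⟨x, hx1, hx2⟩ := ν.exists_lt_apply_of_lt_opNorm
        (show ‖ν‖ - ε < ‖ν‖ by linarith)
      rcases le_or_gt 0 (ν x) with hsgn | hsgn
      · refine ⟨x, le_of_lt hx1, ?_⟩
        rw [Real.norm_eq_abs, abs_of_nonneg hsgn] at hx2
        linarith
      · refine ⟨-x, by rw [norm_neg]; exact le_of_lt hx1, ?_⟩
        rw [Real.norm_eq_abs, abs_of_neg hsgn] at hx2
        rw [map_neg]
        linarith
  set σ : ℝ := if 0 ≤ a then 1 else -1 with hσ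
  have hσa : σ * a = |a| := by
    rcases le_or_gt 0 a with h | h
    · rw [hσ, if_pos h, one_mul, abs_of_nonneg h]
    · rw [hσ, if_neg (not_le.mpr h), abs_of_neg h]; ring
  have hσabs : |σ| = 1 := by
    rcases le_or_gt 0 a with h | h
    · rw [hσ, if_pos h]; simp
    · rw [hσ, if_neg (not_le.mpr h)]; simp
  -- test functions
  set fk : ℕ → XS := fun k => σ • chi t k + f - f * chi t k with hfk
  have hfkval : ∀ k x, fk k x = σ * chi t k x + f x - f x * chi t k x := fun k x => rfl
  have hfknorm : ∀ k, ‖fk k‖ ≤ 1 := by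
    intro k
    rw [ContinuousMap.norm_le _ zero_le_one]
    intro x
    rw [hfkval, Real.norm_eq_abs]
    by_cases hx : x ∈ cell t k
    · rw [chi_apply_of_mem hx]
      calc |σ * 1 + f x - f x * 1| = |σ| := by ring_nf
        _ ≤ 1 := le_of_eq hσabs
    · rw [chi_apply_of_not_mem hx]
      calc |σ * 0 + f x - f x * 0| = |f x| := by ring_nf
        _ ≤ 1 := le_trans (f.norm_coe_le_norm x) hf1
  have hfkt : ∀ k, fk k t = σ := by
    intro k
    rw [hfkval, chi_apply_of_mem (self_mem_cell t k)]
    ring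
  -- φ (fk k) = |a| + ν f + err k
  have hφfk : ∀ k, φ (fk k) = |a| + ν f + ν (σ • chi t k - f * chi t k) := by
    intro k
    have hφν : φ = ν + a • dirac t := by rw [hν, sub_add_cancel]
    have hfkdec : fk k = f + (σ • chi t k - f * chi t k) := by
      show σ • chi t k + f - f * chi t k = _
      abel
    rw [hφν, hfkdec]
    rw [ContinuousLinearMap.add_apply, ContinuousLinearMap.smul_apply, smul_eq_mul]
    rw [map_add (ν : DS)]
    have hδ : dirac t (f + (σ • chi t k - f * chi t k)) = σ := by
      rw [show f + (σ • chi t k - f * chi t k) = fk k by rw [hfkdec]]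
      exact hfkt k
    rw [hδ, mul_comm a σ, hσa]
    ring
  -- the error term tends to 0 along UF
  have herr : Tendsto (fun k => ν (σ • chi t k - f * chi t k)) (UF : Filter ℕ) (𝓝 0) := by
    have hsplit : ∀ k, σ • chi t k - f * chi t k
        = (σ - f t) • chi t k - (f - f t • (1 : XS)) * chi t k := by
      intro k
      ext x
      simp [ContinuousMap.smul_apply, ContinuousMap.mul_apply, ContinuousMap.sub_apply,
        ContinuousMap.add_apply, ContinuousMap.one_apply]
      ring
    have h1 : Tendsto (fun k => (σ - f t) * ν (chi t k)) (UF : Filter ℕ) (𝓝 0) := by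
      have hν0 : Tendsto (fun k => ν (chi t k)) (UF : Filter ℕ) (𝓝 0) := by
        have hexp : ∀ k, ν (chi t k) = phiSeq n φ k - a := by
          intro k
          rw [hν, ContinuousLinearMap.sub_apply, ContinuousLinearMap.smul_apply, smul_eq_mul]
          have : dirac t (chi t k) = 1 := by
            rw [dirac_apply]
            exact chi_apply_of_mem (self_mem_cell t k)
          rw [this, mul_one]
          rfl
        have hlim : Tendsto (fun k => phiSeq n φ k - a) (UF : Filter ℕ) (𝓝 (a - a)) :=
          (Phifun_tendsto n φ).sub tendsto_const_nhds
        rw [sub_self] at hlim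
        exact Tendsto.congr (fun k => (hexp k).symm) hlim
      have := hν0.const_mul (σ - f t)
      simpa using this
    have h2 : Tendsto (fun k => ν ((f - f t • (1 : XS)) * chi t k)) (UF : Filter ℕ) (𝓝 0) := by
      set g : XS := f - f t • (1 : XS) with hg
      have hgt : g t = 0 := by
        rw [hg, ContinuousMap.sub_apply, ContinuousMap.smul_apply, ContinuousMap.one_apply]
        simp
      have hnormto : Tendsto (fun k => ‖g * chi t k‖) atTop (𝓝 0) := by
        rw [Metric.tendsto_atTop]
        intro ε' hε'
        obtain ⟨m, hm⟩ := exists_cell_small g t hgt (show (0:ℝ) < ε' / 2 by linarith)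
        refine ⟨m, fun k hk => ?_⟩
        rw [Real.dist_eq, sub_zero, abs_of_nonneg (norm_nonneg _)]
        have hle : ‖g * chi t k‖ ≤ ε' / 2 := by
          rw [ContinuousMap.norm_le _ (by linarith)]
          intro x
          rw [ContinuousMap.mul_apply, Real.norm_eq_abs, abs_mul]
          by_cases hx : x ∈ cell t k
          · rw [chi_apply_of_mem hx, abs_one, mul_one]
            exact hm x (cell_antitone hk hx)
          · rw [chi_apply_of_not_mem hx]
            simp
            linarith
        linarith
      have habs : ∀ k, |ν (g * chi t k)| ≤ ‖ν‖ * ‖g * chi t k‖ := by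
        intro k
        calc |ν (g * chi t k)| = ‖ν (g * chi t k)‖ := (Real.norm_eq_abs _).symm
          _ ≤ ‖ν‖ * ‖g * chi t k‖ := ν.le_opNorm _
      have hsq : Tendsto (fun k => |ν (g * chi t k)|) atTop (𝓝 0) := by
        apply squeeze_zero (fun k => abs_nonneg _) habs
        have := hnormto.const_mul ‖ν‖
        simpa using this
      have h0 : Tendsto (fun k => ν (g * chi t k)) atTop (𝓝 0) :=
        (tendsto_zero_iff_abs_tendsto_zero _).mpr hsq
      exact h0.mono_left UF_le_atTop
    have hcomb : Tendsto
        (fun k => (σ - f t) * ν (chi t k) - ν ((f - f t • (1 : XS)) * chi t k))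
        (UF : Filter ℕ) (𝓝 0) := by
      have := h1.sub h2
      simpa using this
    apply Tendsto.congr ?_ hcomb
    intro k
    rw [hsplit k, map_sub]
    congr 1
    rw [map_smul, smul_eq_mul]
  -- take the limit
  have hφle : ∀ k, φ (fk k) ≤ ‖φ‖ := by
    intro k
    calc φ (fk k) ≤ |φ (fk k)| := le_abs_self _
      _ = ‖φ (fk k)‖ := (Real.norm_eq_abs _).symm
      _ ≤ ‖φ‖ * ‖fk k‖ := φ.le_opNorm _
      _ ≤ ‖φ‖ := by nlinarith [hfknorm k, norm_nonneg φ]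
  have hlim : Tendsto (fun k => φ (fk k)) (UF : Filter ℕ) (𝓝 (|a| + ν f)) := by
    have : Tendsto (fun k => |a| + ν f + ν (σ • chi t k - f * chi t k))
        (UF : Filter ℕ) (𝓝 (|a| + ν f + 0)) := tendsto_const_nhds.add herr
    rw [add_zero] at this
    apply Tendsto.congr ?_ this
    intro k
    exact (hφfk k).symm
  have hkey : |a| + ν f ≤ ‖φ‖ := le_of_tendsto hlim (Filter.Eventually.of_forall hφle)
  linarith

lemma Sop_dissip (n : ℕ) : ∀ lam ∈ numericalRange ℝ (X := DS) (Sop n), lam ≤ 0 := by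
  rintro lam ⟨φ, Φ, hφ, hΦ, hΦφ, rfl⟩
  set a : ℝ := Phifun n φ with ha
  set t : KS := tpt n with ht
  have hval : Φ (Sop n φ) = -(a * Φ (dirac t)) := by
    rw [Sop_apply, map_smul, smul_eq_mul, map_neg]
    ring
  have hA := normA n φ
  rw [hφ] at hA
  set ν : DS := φ - a • dirac t with hν
  have hΦν : Φ ν ≤ ‖ν‖ := by
    calc Φ ν ≤ |Φ ν| := le_abs_self _
      _ = ‖Φ ν‖ := (Real.norm_eq_abs _).symm
      _ ≤ ‖Φ‖ * ‖ν‖ := Φ.le_opNorm ν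
      _ = ‖ν‖ := by rw [hΦ, one_mul]
  have hexpand : (1:ℝ) = a * Φ (dirac t) + Φ ν := by
    rw [← hΦφ, hν, map_sub, map_smul, smul_eq_mul]
    ring
  have hkey : |a| ≤ a * Φ (dirac t) := by linarith
  rw [hval]
  have := abs_nonneg a
  linarith

lemma Sop_linearIndependent : LinearIndependent ℝ Sop := by
  refine (linearIndependent_iff' (R := ℝ) (v := Sop)).mpr ?_
  intro s g hsum i hi
  have hterm : ∀ j ∈ s, ((g j • Sop j) (dirac (tpt i))) (1 : XS)
      = -(g j) * (if j = i then 1 else 0) := by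
    intro j _
    rw [ContinuousLinearMap.smul_apply, Sop_apply, ContinuousLinearMap.smul_apply,
      ContinuousLinearMap.smul_apply, ContinuousLinearMap.neg_apply, dirac_apply]
    have hPhi : Phifun j (dirac (tpt i)) = (if j = i then 1 else 0) := by
      by_cases hji : j = i
      · rw [if_pos hji, hji, Phifun_dirac_self]
      · rw [if_neg hji, Phifun_dirac_other (fun hc => hji hc.symm)]
    rw [hPhi]
    have h1 : (1 : XS) (tpt j) = 1 := rfl
    rw [h1]
    simp only [smul_eq_mul]
    ring
  have hsum_eval : ((∑ j ∈ s, g j • Sop j) (dirac (tpt i))) (1 : XS)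
      = ∑ j ∈ s, ((g j • Sop j) (dirac (tpt i))) (1 : XS) := by
    rw [ContinuousLinearMap.sum_apply, ContinuousLinearMap.sum_apply]
  have h0 : ∑ j ∈ s, -(g j) * (if j = i then 1 else 0) = 0 := by
    rw [← Finset.sum_congr rfl hterm, ← hsum_eval, hsum]
    simp
  rw [Finset.sum_eq_single i (fun b _ hb => by rw [if_neg hb]; ring)
    (fun h => absurd hi h)] at h0
  rw [if_pos rfl] at h0
  linarith

lemma Sop_finrank (n : ℕ) :
    FiniteDimensional ℝ ↥(LinearMap.range ((Sop n) : DS →ₗ[ℝ] DS)) := by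
  have hle : LinearMap.range ((Sop n) : DS →ₗ[ℝ] DS)
      ≤ Submodule.span ℝ {dirac (tpt n)} := by
    rintro y ⟨φ, rfl⟩
    rw [Submodule.mem_span_singleton]
    refine ⟨-(Phifun n φ), ?_⟩
    show -(Phifun n φ) • dirac (tpt n) = Sop n φ
    rw [Sop_apply, smul_neg]; exact neg_smul (Phifun n φ) (dirac (tpt n))
  haveI := FiniteDimensional.span_singleton ℝ (dirac (tpt n))
  exact Submodule.finiteDimensional_of_le hle

end DissipCantor

end

/-- There is a real Banach space `X` such that every nonzero dissipative operator on `X` fixes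
a copy of `ℓ₁`, while on the dual `X*` there is an infinite linearly independent family of
finite-rank dissipative operators. -/
theorem exists_banach_dissipative_fix_l1_but_dual_infinite_finiteRank_dissipative :
    ∃ (X : Type) (_ : NormedAddCommGroup X) (_ : NormedSpace ℝ X) (_ : CompleteSpace X),
      (∀ T : X →L[ℝ] X, T ≠ 0 → (∀ lam ∈ numericalRange ℝ T, lam ≤ 0) →
        ∃ (J : lp (fun _ : ℕ => ℝ) 1 →L[ℝ] X) (c : ℝ), 0 < c ∧
          ∀ u : lp (fun _ : ℕ => ℝ) 1, c * ‖u‖ ≤ ‖J u‖ ∧ c * ‖u‖ ≤ ‖T (J u)‖) ∧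
      ∃ S : ℕ → (StrongDual ℝ X →L[ℝ] StrongDual ℝ X),
        LinearIndependent ℝ S ∧
        ∀ n : ℕ, FiniteDimensional ℝ ↥(LinearMap.range ((S n) : StrongDual ℝ X →ₗ[ℝ]
            StrongDual ℝ X)) ∧
          ∀ lam ∈ numericalRange ℝ (S n), lam ≤ 0 := by
  refine ⟨DissipCantor.XS, inferInstance, inferInstance, inferInstance, ?_, ?_⟩
  · intro T hT hdis
    exact DissipCantor.part1 T hT hdis
  · exact ⟨DissipCantor.Sop, DissipCantor.Sop_linearIndependent,
      fun n => ⟨DissipCantor.Sop_finrank n, DissipCantor.Sop_dissip n⟩⟩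
end
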